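/- arXiv:1406.2589 — 6 statements merged into one kernel-verified Lean document; each statement's English description precedes it below -/
import Mathlib

section
/- Let A ⊆ ℝ^d and α ≥ 0. If C^α(A) = ∞, then there exists a sequence (C_n)_{n∈ℕ} of pairwise disjoint cubes in ℝ^d with side lengths ∥C_n∥ → ∞ such that |⌊A⌋ ∩ C_n| / ∥C_n∥^α → ∞ as n → ∞. -/
open Set MeasureTheory Filter
open scoped ENNReal NNReal

noncomputable section

variable {ι : Type*} [Fintype ι]

/-- A (half-open) cube in `ℝ^ι` based at `a` with side length `s`. -/
def cube (a : EuclideanSpace ℝ ι) (s : ℝ) : Set (EuclideanSpace ℝ ι) :=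
  {x | ∀ i, a i ≤ x i ∧ x i < a i + s}

/-- Coordinatewise floor map. -/
def floorPt (x : EuclideanSpace ℝ ι) : EuclideanSpace ℝ ι := WithLp.toLp 2 (fun i => (⌊x i⌋ : ℝ))

/-- `⌊A⌋`, the image of `A` under the coordinatewise floor map. -/
def floorSet (A : Set (EuclideanSpace ℝ ι)) : Set (EuclideanSpace ℝ ι) := floorPt '' A

/-- The α-counting measure of `A`. -/
def countMeas (α : ℝ) (A : Set (EuclideanSpace ℝ ι)) : ℝ≥0∞ :=
  ⨅ ℓ : ℝ, ⨆ (a : EuclideanSpace ℝ ι) (s : ℝ) (_ : ℓ ≤ s ∧ 0 < s),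
    ((floorSet A ∩ cube a s).encard : ℝ≥0∞) / ENNReal.ofReal (s ^ α)

/-- The counting dimension of `A`. -/
def cdim (A : Set (EuclideanSpace ℝ ι)) : ℝ :=
  sInf {α : ℝ | 0 ≤ α ∧ countMeas α A = 0}

/-- The centered cube `[-ℓ, ℓ)^ι`. -/
def centeredCube (ℓ : ℝ) : Set (EuclideanSpace ℝ ι) :=
  cube (WithLp.toLp 2 (fun _ => -ℓ) : EuclideanSpace ℝ ι) (2 * ℓ)

/-- The α-mass measure of `A`. -/
def massMeas (α : ℝ) (A : Set (EuclideanSpace ℝ ι)) : ℝ≥0∞ :=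
  ⨅ L : ℝ, ⨆ (ℓ : ℝ) (_ : L ≤ ℓ ∧ 0 < ℓ),
    ((floorSet A ∩ centeredCube ℓ).encard : ℝ≥0∞) / ENNReal.ofReal ((2 * ℓ) ^ α)

/-- The (upper) mass dimension of `A`. -/
def mdim (A : Set (EuclideanSpace ℝ ι)) : ℝ :=
  sInf {α : ℝ | 0 ≤ α ∧ massMeas α A = 0}


lemma finite_inter (A : Set (EuclideanSpace ℝ ι)) (a : EuclideanSpace ℝ ι) (s : ℝ) :
    (floorSet A ∩ cube a s).Finite := by
  have hsub : floorSet A ∩ cube a s ⊆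
      WithLp.toLp 2 '' Set.pi Set.univ (fun i => ((fun k : ℤ => (k : ℝ)) '' Set.Ico ⌈a i⌉ ⌈a i + s⌉)) := by
    rintro x ⟨⟨y, -, rfl⟩, hx⟩
    exact ⟨fun i => (⌊y i⌋ : ℝ), fun i _ => ⟨⌊y i⌋, ⟨Int.ceil_le.2 (hx i).1, Int.lt_ceil.2 (hx i).2⟩, rfl⟩, rfl⟩
  exact ((Set.Finite.pi fun i => (Set.finite_Ico _ _).image _).image _).subset hsub

lemma exists_big_cube {α : ℝ} {A : Set (EuclideanSpace ℝ ι)}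
    (h : countMeas α A = ⊤) (L b : ℝ) :
    ∃ a s, L ≤ s ∧ 0 < s ∧
      ENNReal.ofReal b < ((floorSet A ∩ cube a s).encard : ℝ≥0∞) / ENNReal.ofReal (s ^ α) := by
  rw [countMeas, iInf_eq_top] at h
  have h3 : ENNReal.ofReal b < ⊤ := ENNReal.ofReal_lt_top
  rw [← h L] at h3
  simp only [lt_iSup_iff] at h3
  obtain ⟨a, s, ⟨h1, h2⟩, hlt⟩ := h3
  exact ⟨a, s, h1, h2, hlt⟩

lemma key_step {α : ℝ} (hα : 0 ≤ α) {A : Set (EuclideanSpace ℝ ι)}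
    (h : countMeas α A = ⊤) (L M : ℝ) (hL : 1 ≤ L) (hM : 0 ≤ M)
    (q : EuclideanSpace ℝ ι) (T : ℝ) :
    ∃ a s, L ≤ s ∧ 0 < s ∧ Disjoint (cube a s) (cube q T) ∧
      ENNReal.ofReal M ≤ ((floorSet A ∩ cube a s).encard : ℝ≥0∞) / ENNReal.ofReal (s ^ α) := by
  classical
  set D : ℕ := Fintype.card ι with hDdef
  have hQfin : (floorSet A ∩ cube q T).Finite := finite_inter A q T
  set K : ℕ := (floorSet A ∩ cube q T).ncard with hK
  obtain ⟨a, s, hLs, hs, hlt⟩ := exists_big_cube h L (2 * D * M + K + 1)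
  have hs1 : (1:ℝ) ≤ s := le_trans hL hLs
  have hsα1 : (1:ℝ) ≤ s ^ α := Real.one_le_rpow hs1 hα
  have hsα0 : (0:ℝ) < s ^ α := lt_of_lt_of_le one_pos hsα1
  have hof0 : ENNReal.ofReal (s ^ α) ≠ 0 := by
    simp [ENNReal.ofReal_eq_zero, not_le, hsα0]
  have hofT : ENNReal.ofReal (s ^ α) ≠ ⊤ := ENNReal.ofReal_ne_top
  have hCfin : (floorSet A ∩ cube a s).Finite := finite_inter A a s
  set N : ℕ := (floorSet A ∩ cube a s).ncard with hN
  -- real inequality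
  have hreal : (2 * D * M + K + 1) * s ^ α < (N : ℝ) := by
    rw [ENNReal.lt_div_iff_mul_lt (Or.inl hof0) (Or.inl hofT)] at hlt
    rw [← hCfin.cast_ncard_eq, ← hN] at hlt
    have hb0 : (0:ℝ) ≤ 2 * D * M + K + 1 := by positivity
    rw [← ENNReal.ofReal_mul hb0] at hlt
    have : ((N : ℕ∞) : ℝ≥0∞) = ENNReal.ofReal (N : ℝ) := by
      rw [ENat.toENNReal_coe, ENNReal.ofReal_natCast]
    rw [this] at hlt
    exact (ENNReal.ofReal_lt_ofReal_iff_of_nonneg (by positivity)).1 hlt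
  -- the outside part
  set S : Set (EuclideanSpace ℝ ι) := (floorSet A ∩ cube a s) \ cube q T with hS
  have hSfin : S.Finite := hCfin.subset diff_subset
  have hNle : N ≤ S.ncard + K := by
    have hcov : floorSet A ∩ cube a s ⊆ S ∪ (floorSet A ∩ cube q T) := by
      intro x hx
      by_cases hxQ : x ∈ cube q T
      · exact Or.inr ⟨hx.1, hxQ⟩
      · exact Or.inl ⟨hx, hxQ⟩
    exact le_trans (Set.ncard_le_ncard hcov (hSfin.union hQfin)) (Set.ncard_union_le _ _)
  -- slabs
  set slab : ι × Bool → Set (EuclideanSpace ℝ ι) :=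
    fun p => cube a s ∩ {x | if p.2 then q p.1 + T ≤ x p.1 else x p.1 < q p.1} with hslab
  have hSsub : S ⊆ ⋃ p, slab p := by
    rintro x ⟨⟨-, hxC⟩, hxQ⟩
    simp only [cube, Set.mem_setOf_eq, not_forall] at hxQ
    obtain ⟨i, hi⟩ := hxQ
    rw [not_and_or, not_le, not_lt] at hi
    rcases hi with h1 | h2
    · exact Set.mem_iUnion.2 ⟨(i, false), hxC, by simpa using h1⟩
    · exact Set.mem_iUnion.2 ⟨(i, true), hxC, by simpa using h2⟩
  have hfinp : ∀ p, (S ∩ slab p).Finite := fun p => hSfin.subset inter_subset_left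
  -- pigeonhole
  have hex : ∃ p, M * s ^ α < ((S ∩ slab p).ncard : ℝ) := by
    by_contra hcon
    push_neg at hcon
    have h1 : (S.ncard : ℝ) ≤ ∑ p : ι × Bool, ((S ∩ slab p).ncard : ℝ) := by
      have hsubF : hSfin.toFinset ⊆
          Finset.univ.biUnion (fun p => (hfinp p).toFinset) := by
        intro x hx
        rw [Set.Finite.mem_toFinset] at hx
        obtain ⟨p, hp⟩ := Set.mem_iUnion.1 (hSsub hx)
        exact Finset.mem_biUnion.2 ⟨p, Finset.mem_univ _, (hfinp p).mem_toFinset.2 ⟨hx, hp⟩⟩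
      have h2 := le_trans (Finset.card_le_card hsubF) (Finset.card_biUnion_le)
      rw [← Set.ncard_eq_toFinset_card _ hSfin] at h2
      have h3 : ∀ p, ((hfinp p).toFinset.card : ℝ) = ((S ∩ slab p).ncard : ℝ) := by
        intro p; rw [Set.ncard_eq_toFinset_card _ (hfinp p)]
      calc (S.ncard : ℝ) ≤ (∑ p : ι × Bool, (hfinp p).toFinset.card : ℕ) := by exact_mod_cast h2
        _ = ∑ p : ι × Bool, ((S ∩ slab p).ncard : ℝ) := by
            push_cast
            exact Finset.sum_congr rfl fun p _ => h3 p
    have h4 : ∑ p : ι × Bool, ((S ∩ slab p).ncard : ℝ) ≤ (2 * D) * (M * s ^ α) := by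
      calc ∑ p : ι × Bool, ((S ∩ slab p).ncard : ℝ)
          ≤ ∑ _p : ι × Bool, M * s ^ α := Finset.sum_le_sum fun p _ => hcon p
        _ = (Fintype.card (ι × Bool) : ℝ) * (M * s ^ α) := by
            rw [Finset.sum_const, Finset.card_univ, nsmul_eq_mul]
        _ = (2 * D) * (M * s ^ α) := by
            rw [Fintype.card_prod, Fintype.card_bool, hDdef]; push_cast; ring
    have h5 : (N : ℝ) ≤ (S.ncard : ℝ) + K := by exact_mod_cast hNle
    have hK0 : (0:ℝ) ≤ K := Nat.cast_nonneg K
    nlinarith [hsα1, hreal, hM, h1, h4, h5, hK0]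
  obtain ⟨⟨i, σ⟩, hp⟩ := hex
  set newc : ℝ := if σ then max (a i) (q i + T) else min (a i) (q i - s) with hnewc
  set a' : EuclideanSpace ℝ ι := WithLp.toLp 2 (fun j => if j = i then newc else a j) with ha'
  have ha'i : a' i = newc := by simp [ha']
  refine ⟨a', s, hLs, hs, ?_, ?_⟩
  · rw [Set.disjoint_left]
    intro x hxD hxQ
    have hxi := hxD i
    rw [ha'i] at hxi
    have hQi := hxQ i
    cases σ with
    | false =>
      have : newc + s ≤ q i := by
        rw [hnewc]; simp only [if_neg Bool.false_ne_true]
        have := min_le_right (a i) (q i - s)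
        linarith
      linarith [hxi.2, hQi.1]
    | true =>
      have : q i + T ≤ newc := by
        rw [hnewc]; simp only [if_pos rfl]
        exact le_max_right _ _
      linarith [hxi.1, hQi.2]
  · have hsub2 : S ∩ slab (i, σ) ⊆ floorSet A ∩ cube a' s := by
      rintro x ⟨⟨⟨hxF, -⟩, -⟩, hxC, hxH⟩
      refine ⟨hxF, fun j => ?_⟩
      by_cases hj : j = i
      · subst hj
        rw [ha'i]
        simp only [hslab, Set.mem_setOf_eq] at hxH
        cases σ with
        | false =>
          have hnc : newc = min (a j) (q j - s) := by simp [hnewc]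
          simp only [Bool.false_eq_true, if_false] at hxH
          rw [hnc]
          constructor
          · exact le_trans (min_le_left _ _) (hxC j).1
          · rcases le_or_gt (a j) (q j - s) with hc | hc
            · rw [min_eq_left hc]; exact (hxC j).2
            · rw [min_eq_right hc.le]; linarith
        | true =>
          have hnc : newc = max (a j) (q j + T) := by simp [hnewc]
          simp only [if_pos rfl] at hxH
          rw [hnc]
          refine ⟨max_le (hxC j).1 hxH, ?_⟩
          have h6 := le_max_left (a j) (q j + T)
          have h7 := (hxC j).2
          linarith
      · have haj : a' j = a j := by simp [ha', hj]
        rw [haj]; exact hxC j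
    rw [ENNReal.le_div_iff_mul_le (Or.inl hof0) (Or.inl hofT)]
    calc ENNReal.ofReal M * ENNReal.ofReal (s ^ α) = ENNReal.ofReal (M * s ^ α) :=
        (ENNReal.ofReal_mul hM).symm
      _ ≤ ENNReal.ofReal (((S ∩ slab (i, σ)).ncard : ℝ)) := ENNReal.ofReal_le_ofReal hp.le
      _ = (((S ∩ slab (i, σ)).ncard : ℕ∞) : ℝ≥0∞) := by
          rw [ENNReal.ofReal_natCast, ENat.toENNReal_coe]
      _ ≤ ((floorSet A ∩ cube a' s).encard : ℝ≥0∞) := by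
          rw [(hfinp (i, σ)).cast_ncard_eq]
          exact_mod_cast Set.encard_mono hsub2
/-- Auxiliary recursion producing cubes together with enclosing boxes. -/
def seqAux (f : ℕ → EuclideanSpace ℝ ι → ℝ → EuclideanSpace ℝ ι)
    (g : ℕ → EuclideanSpace ℝ ι → ℝ → ℝ) :
    ℕ → (EuclideanSpace ℝ ι × ℝ) × (EuclideanSpace ℝ ι × ℝ)
  | 0 => ((f 0 0 0, g 0 0 0), (f 0 0 0, g 0 0 0))
  | n + 1 =>
    let p := seqAux f g n
    let a' := f (n + 1) p.2.1 p.2.2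
    let s' := g (n + 1) p.2.1 p.2.2
    ((a', s'), ((WithLp.toLp 2 (fun j => min (p.2.1 j) (a' j)) : EuclideanSpace ℝ ι),
      p.2.2 + s' + ∑ j, |p.2.1 j - a' j|))

lemma cube_subset_cube {a q : EuclideanSpace ℝ ι} {s T : ℝ}
    (h : ∀ j, q j ≤ a j ∧ a j + s ≤ q j + T) : cube a s ⊆ cube q T := by
  intro x hx j
  exact ⟨le_trans (h j).1 (hx j).1, lt_of_lt_of_le (hx j).2 (h j).2⟩


/-- If the `α`-counting measure of `A` is infinite, then there is a sequence of pairwise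
disjoint cubes with side lengths tending to infinity along which the ratio
`|⌊A⌋ ∩ Cₙ| / ∥Cₙ∥^α` tends to infinity. -/
theorem stmt_2 (d : ℕ) (α : ℝ) (hα : 0 ≤ α) (A : Set (EuclideanSpace ℝ (Fin d)))
    (h : countMeas α A = ⊤) :
    ∃ (a : ℕ → EuclideanSpace ℝ (Fin d)) (s : ℕ → ℝ),
      (∀ n, 0 < s n) ∧
      (∀ n m, n ≠ m → Disjoint (cube (a n) (s n)) (cube (a m) (s m))) ∧
      Tendsto s atTop atTop ∧
      Tendsto (fun n => ((floorSet A ∩ cube (a n) (s n)).encard : ℝ≥0∞) /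
        ENNReal.ofReal (s n ^ α)) atTop (nhds ⊤) := by
  classical
  have key : ∀ (n : ℕ) (q : EuclideanSpace ℝ (Fin d)) (T : ℝ),
      ∃ a s, ((n : ℝ) + 1) ≤ s ∧ 0 < s ∧ Disjoint (cube a s) (cube q T) ∧
        ENNReal.ofReal n ≤ ((floorSet A ∩ cube a s).encard : ℝ≥0∞) /
          ENNReal.ofReal (s ^ α) := by
    intro n q T
    have h1 : (1 : ℝ) ≤ (n : ℝ) + 1 := by have := Nat.cast_nonneg (α := ℝ) n; linarith
    exact key_step hα h ((n : ℝ) + 1) n h1 (Nat.cast_nonneg n) q T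
  choose f g hf1 hf2 hf3 hf4 using key
  set st := seqAux f g with hst
  set a : ℕ → EuclideanSpace ℝ (Fin d) := fun n => (st n).1.1 with ha
  set s : ℕ → ℝ := fun n => (st n).1.2 with hs
  set qq : ℕ → EuclideanSpace ℝ (Fin d) := fun n => (st n).2.1 with hqq
  set TT : ℕ → ℝ := fun n => (st n).2.2 with hTT
  -- basic recursion facts
  have hsucc : ∀ n, a (n + 1) = f (n + 1) (qq n) (TT n) ∧ s (n + 1) = g (n + 1) (qq n) (TT n) ∧
      qq (n + 1) = (fun j => min (qq n j) (a (n + 1) j)) ∧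
      TT (n + 1) = TT n + s (n + 1) + ∑ j, |qq n j - a (n + 1) j| := by
    intro n
    refine ⟨?_, ?_, ?_, ?_⟩ <;> simp only [ha, hs, hqq, hTT, hst, seqAux, WithLp.ofLp_toLp]
  have hbase : a 0 = f 0 0 0 ∧ s 0 = g 0 0 0 ∧ qq 0 = a 0 ∧ TT 0 = s 0 := by
    refine ⟨?_, ?_, ?_, ?_⟩ <;> simp only [ha, hs, hqq, hTT, hst, seqAux]
  -- properties of each cube
  have hP : ∀ n : ℕ, ((n : ℝ) + 1) ≤ s n ∧ 0 < s n ∧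
      ENNReal.ofReal n ≤ ((floorSet A ∩ cube (a n) (s n)).encard : ℝ≥0∞) /
        ENNReal.ofReal (s n ^ α) := by
    intro n
    cases n with
    | zero =>
      rw [hbase.1, hbase.2.1]
      exact ⟨by simpa using hf1 0 0 0, hf2 0 0 0, hf4 0 0 0⟩
    | succ n =>
      rw [(hsucc n).1, (hsucc n).2.1]
      exact ⟨hf1 _ _ _, hf2 _ _ _, hf4 _ _ _⟩
  have hdisj0 : ∀ n, Disjoint (cube (a (n + 1)) (s (n + 1))) (cube (qq n) (TT n)) := by
    intro n
    rw [(hsucc n).1, (hsucc n).2.1]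
    exact hf3 _ _ _
  -- positivity of box sizes
  have hTTpos : ∀ n, 0 < TT n := by
    intro n
    induction n with
    | zero => rw [hbase.2.2.2]; exact (hP 0).2.1
    | succ n ih =>
      rw [(hsucc n).2.2.2]
      have h1 := (hP (n + 1)).2.1
      have h2 : (0:ℝ) ≤ ∑ j, |qq n j - a (n + 1) j| :=
        Finset.sum_nonneg fun j _ => abs_nonneg _
      linarith
  -- nesting of boxes
  have hnest : ∀ n, ∀ m ≤ n, cube (a m) (s m) ⊆ cube (qq n) (TT n) := by
    intro n
    induction n with
    | zero =>
      intro m hm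
      interval_cases m
      rw [hbase.2.2.1, hbase.2.2.2]
    | succ n ih =>
      have hstep : ∀ j, qq (n + 1) j ≤ qq n j ∧ qq n j + TT n ≤ qq (n + 1) j + TT (n + 1) ∧
          qq (n + 1) j ≤ a (n + 1) j ∧
          a (n + 1) j + s (n + 1) ≤ qq (n + 1) j + TT (n + 1) := by
        intro j
        have e1 : qq (n + 1) j = min (qq n j) (a (n + 1) j) := by
          rw [(hsucc n).2.2.1]
        have e2 := (hsucc n).2.2.2
        have habs : |qq n j - a (n + 1) j| ≤ ∑ j', |qq n j' - a (n + 1) j'| :=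
          Finset.single_le_sum (f := fun j' => |qq n j' - a (n + 1) j'|)
            (fun j' _ => abs_nonneg _) (Finset.mem_univ j)
        have hTn : 0 < TT n := hTTpos n
        have hsn : 0 < s (n + 1) := (hP (n + 1)).2.1
        have hm1 : qq n j ≤ min (qq n j) (a (n + 1) j) + |qq n j - a (n + 1) j| := by
          rcases min_cases (qq n j) (a (n + 1) j) with ⟨hc, _⟩ | ⟨hc, _⟩ <;>
            rcases abs_cases (qq n j - a (n + 1) j) with h' | h' <;> rw [hc] <;> linarith [h'.1]
        have hm2 : a (n + 1) j ≤ min (qq n j) (a (n + 1) j) + |qq n j - a (n + 1) j| := by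
          rcases min_cases (qq n j) (a (n + 1) j) with ⟨hc, _⟩ | ⟨hc, _⟩ <;>
            rcases abs_cases (qq n j - a (n + 1) j) with h' | h' <;> rw [hc] <;> linarith [h'.1]
        refine ⟨by rw [e1]; exact min_le_left _ _, ?_, by rw [e1]; exact min_le_right _ _, ?_⟩
        · rw [e1, e2]; linarith
        · rw [e1, e2]; linarith
      intro m hm
      rcases eq_or_lt_of_le hm with rfl | hm'
      · exact cube_subset_cube fun j => ⟨(hstep j).2.2.1, (hstep j).2.2.2⟩
      · exact (ih m (Nat.lt_succ_iff.1 hm')).trans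
          (cube_subset_cube fun j => ⟨(hstep j).1, (hstep j).2.1⟩)
  -- pairwise disjointness
  have hd : ∀ m n, m < n → Disjoint (cube (a n) (s n)) (cube (a m) (s m)) := by
    intro m n hmn
    obtain ⟨k, rfl⟩ := Nat.exists_eq_add_of_lt hmn
    exact (hdisj0 (m + k)).mono_right (hnest (m + k) m (Nat.le_add_right m k))
  refine ⟨a, s, fun n => (hP n).2.1, ?_, ?_, ?_⟩
  · intro n m hnm
    rcases lt_or_gt_of_ne hnm with h' | h'
    · exact (hd n m h').symm
    · exact hd m n h'
  · refine tendsto_atTop_mono (fun n => ?_) tendsto_natCast_atTop_atTop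
    have := (hP n).1
    linarith
  · refine ENNReal.tendsto_nhds_top fun k => ?_
    rw [eventually_atTop]
    refine ⟨k + 1, fun n hn => ?_⟩
    refine lt_of_lt_of_le ?_ (hP n).2.2
    rw [ENNReal.ofReal_natCast]
    exact_mod_cast Nat.lt_of_succ_le hn


end
end

section
/- For every set A ⊆ ℝ^d, the covering dimension equals the counting dimension: covdim(A) = cdim(A). -/
open Set MeasureTheory Filter
open scoped ENNReal NNReal

noncomputable section

variable {ι : Type*} [Fintype ι]

/-- The set of values `Σ_i (∥C_i∥/∥C∥)^α` over all admissible countable cubic covers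
`{C_i}` of `A ∩ C`, where `C` is the cube based at `a` with side length `s`, and the
admissibility constraint is `1 ≤ ∥C_i∥ ≤ r·∥C∥`.  A countable cover is encoded by a set
`I ⊆ ℕ` of indices together with base points `b i` and side lengths `t i`. -/
def coverSums (α r : ℝ) (A : Set (EuclideanSpace ℝ ι)) (a : EuclideanSpace ℝ ι) (s : ℝ) :
    Set ℝ≥0∞ :=
  {x | ∃ (I : Set ℕ) (b : ℕ → EuclideanSpace ℝ ι) (t : ℕ → ℝ),
    (A ∩ cube a s ⊆ ⋃ i ∈ I, cube (b i) (t i)) ∧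
    (∀ i ∈ I, 1 ≤ t i ∧ t i ≤ r * s) ∧
    x = ∑' i : I, ENNReal.ofReal ((t (i : ℕ) / s) ^ α)}

open Classical in
/-- The infimum of `Σ_i (∥C_i∥/∥C∥)^α` over admissible covers, with the convention that the
infimum of the empty set is `0`. -/
def coverInf (α r : ℝ) (A : Set (EuclideanSpace ℝ ι)) (a : EuclideanSpace ℝ ι) (s : ℝ) :
    ℝ≥0∞ :=
  if (coverSums α r A a s).Nonempty then sInf (coverSums α r A a s) else 0

/-- The `α`-covering measure `H^α(A) = lim_{r → 0} limsup_{∥C∥ → ∞} inf {Σ_i (∥C_i∥/∥C∥)^α}`.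
Since the inner quantity is nonincreasing in `r`, the limit as `r → 0` is the supremum over
`r > 0`; the limsup over cubes `C` with `∥C∥ → ∞` is the infimum over `ℓ` of the supremum
over cubes with `∥C∥ ≥ ℓ`. -/
def covMeas (α : ℝ) (A : Set (EuclideanSpace ℝ ι)) : ℝ≥0∞ :=
  ⨆ (r : ℝ) (_ : 0 < r), ⨅ ℓ : ℝ, ⨆ (a : EuclideanSpace ℝ ι) (s : ℝ) (_ : ℓ ≤ s ∧ 0 < s),
    coverInf α r A a s

/-- The covering dimension of `A`. -/
def covdim (A : Set (EuclideanSpace ℝ ι)) : ℝ :=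
  sInf {α : ℝ | 0 ≤ α ∧ covMeas α A = 0}

section aux

variable {d : ℕ}

lemma floorSet_int {A : Set (EuclideanSpace ℝ (Fin d))} {z : EuclideanSpace ℝ (Fin d)}
    (hz : z ∈ floorSet A) (i : Fin d) : z i = (⌊z i⌋ : ℝ) := by
  obtain ⟨x, -, rfl⟩ := hz
  show (⌊x i⌋ : ℝ) = ((⌊((⌊x i⌋ : ℝ))⌋ : ℤ) : ℝ)
  rw [Int.floor_intCast]

lemma cube_card (A : Set (EuclideanSpace ℝ (Fin d))) (a : EuclideanSpace ℝ (Fin d)) {s : ℝ}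
    (hs : 0 ≤ s) :
    (floorSet A ∩ cube a s).Finite ∧
    ((floorSet A ∩ cube a s).encard : ℝ≥0∞) ≤ ENNReal.ofReal ((s + 1) ^ d) := by
  classical
  set Z := floorSet A ∩ cube a s with hZdef
  set g : EuclideanSpace ℝ (Fin d) → (Fin d → ℤ) := fun z i => ⌊z i⌋ with hgdef
  have hinj : Set.InjOn g Z := by
    intro z hz w hw h
    ext i
    rw [floorSet_int hz.1 i, floorSet_int hw.1 i]
    exact congrArg _ (congrFun h i)
  have hsub : g '' Z ⊆
      ↑(Fintype.piFinset fun i : Fin d => Finset.Icc ⌈a i⌉ (⌈a i⌉ + ⌊s⌋)) := by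
    rintro - ⟨z, hz, rfl⟩
    rw [Fintype.coe_piFinset]
    intro i _
    simp only [Finset.coe_Icc, Set.mem_Icc]
    have h1 : a i ≤ z i := (hz.2 i).1
    have h2 : z i < a i + s := (hz.2 i).2
    have hzi : z i = (⌊z i⌋ : ℝ) := floorSet_int hz.1 i
    have hce : a i ≤ (⌈a i⌉ : ℝ) := Int.le_ceil _
    constructor
    · rw [Int.ceil_le]; rw [hzi] at h1; exact_mod_cast h1
    · have : ((g z i : ℤ) : ℝ) < (⌈a i⌉ : ℝ) + s := by
        show ((⌊z i⌋ : ℤ) : ℝ) < _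
        rw [← hzi]; linarith
      have : (g z i : ℤ) ≤ ⌈a i⌉ + ⌊s⌋ := by
        have h3 : ((g z i - ⌈a i⌉ : ℤ) : ℝ) ≤ s := by push_cast; linarith
        have h4 : g z i - ⌈a i⌉ ≤ ⌊s⌋ := Int.le_floor.2 h3
        omega
      exact this
  have hTfin : (↑(Fintype.piFinset fun i : Fin d => Finset.Icc ⌈a i⌉ (⌈a i⌉ + ⌊s⌋)) :
      Set (Fin d → ℤ)).Finite := (Fintype.piFinset _).finite_toSet
  have himfin : (g '' Z).Finite := hTfin.subset hsub
  have hZfin : Z.Finite := Set.Finite.of_finite_image himfin hinj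
  refine ⟨hZfin, ?_⟩
  have hcard : (Fintype.piFinset fun i : Fin d => Finset.Icc ⌈a i⌉ (⌈a i⌉ + ⌊s⌋)).card
      = (⌊s⌋ + 1).toNat ^ d := by
    rw [Fintype.card_piFinset]
    have hic : ∀ i : Fin d, (Finset.Icc ⌈a i⌉ (⌈a i⌉ + ⌊s⌋)).card = (⌊s⌋ + 1).toNat := by
      intro i; rw [Int.card_Icc]; congr 1; ring
    simp [hic, Finset.prod_const]
  have h1 : Z.encard ≤ ((⌊s⌋ + 1).toNat ^ d : ℕ) := by
    rw [← hinj.encard_image]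
    calc (g '' Z).encard ≤ _ := Set.encard_le_encard hsub
      _ = _ := by rw [Set.encard_coe_eq_coe_finsetCard, hcard]
  have h2 : ((Z.encard : ℝ≥0∞)) ≤ (((⌊s⌋ + 1).toNat ^ d : ℕ) : ℝ≥0∞) := by
    exact_mod_cast h1
  refine h2.trans ?_
  rw [← ENNReal.ofReal_natCast]
  apply ENNReal.ofReal_le_ofReal
  push_cast
  have hb : (((⌊s⌋ + 1).toNat : ℤ) : ℝ) ≤ s + 1 := by
    have h0 : (0:ℤ) ≤ ⌊s⌋ + 1 := by
      have := Int.floor_nonneg.2 hs; omega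
    rw [Int.toNat_of_nonneg h0]
    push_cast
    linarith [Int.floor_le s]
  have hb' : (((⌊s⌋ + 1).toNat : ℕ) : ℝ) ≤ s + 1 := by exact_mod_cast hb
  exact pow_le_pow_left₀ (by positivity) hb' d

end aux
section aux2

variable {d : ℕ}

lemma count_eq_encard {T : Set (EuclideanSpace ℝ (Fin d))} (hT : T.Finite) :
    MeasureTheory.Measure.count T = (T.encard : ℝ≥0∞) := by
  rw [MeasureTheory.Measure.count_apply_finite T hT, hT.encard_eq_coe_toFinset_card]
  simp

lemma encard_le_tsum_of_subset {ι' : Type*} [Countable ι'] {Z : Set (EuclideanSpace ℝ (Fin d))}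
    (S : ι' → Set (EuclideanSpace ℝ (Fin d))) (hZ : Z.Finite) (hS : ∀ i, (S i).Finite)
    (hsub : Z ⊆ ⋃ i, S i) :
    ((Z.encard : ℝ≥0∞)) ≤ ∑' i, ((S i).encard : ℝ≥0∞) := by
  calc (Z.encard : ℝ≥0∞) = MeasureTheory.Measure.count Z := (count_eq_encard hZ).symm
    _ ≤ MeasureTheory.Measure.count (⋃ i, S i) := measure_mono hsub
    _ ≤ ∑' i, MeasureTheory.Measure.count (S i) := measure_iUnion_le _
    _ ≤ ∑' i, ((S i).encard : ℝ≥0∞) :=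
        ENNReal.tsum_le_tsum fun i => le_of_eq (count_eq_encard (hS i))

lemma coverSums_nonempty (α r : ℝ) (A : Set (EuclideanSpace ℝ (Fin d)))
    (a : EuclideanSpace ℝ (Fin d)) {s : ℝ} (hrs : 1 ≤ r * s) :
    (coverSums α r A a s).Nonempty := by
  obtain ⟨f, hf⟩ := exists_surjective_nat (Fin d → ℤ)
  refine ⟨_, Set.univ, fun n => (WithLp.toLp 2 (fun j => (f n j : ℝ)) : EuclideanSpace ℝ (Fin d)),
    fun _ => 1, ?_, fun i _ => ⟨le_rfl, hrs⟩, rfl⟩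
  intro x _
  obtain ⟨n, hn⟩ := hf (fun j => ⌊x j⌋)
  refine Set.mem_iUnion₂.2 ⟨n, trivial, fun j => ?_⟩
  have hj : (f n j : ℝ) = ((⌊x j⌋ : ℤ) : ℝ) := by rw [hn]
  show (f n j : ℝ) ≤ x j ∧ x j < (f n j : ℝ) + 1
  rw [hj]
  exact ⟨Int.floor_le _, Int.lt_floor_add_one _⟩

lemma coverInf_le {α r : ℝ} {A : Set (EuclideanSpace ℝ (Fin d))}
    {a : EuclideanSpace ℝ (Fin d)} {s : ℝ} {x : ℝ≥0∞} (hx : x ∈ coverSums α r A a s) :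
    coverInf α r A a s ≤ x := by
  unfold coverInf
  rw [if_pos ⟨x, hx⟩]
  exact sInf_le hx

lemma exists_cover {α r : ℝ} {A : Set (EuclideanSpace ℝ (Fin d))}
    {a : EuclideanSpace ℝ (Fin d)} {s : ℝ} (hne : (coverSums α r A a s).Nonempty) {δ : ℝ≥0∞}
    (h : coverInf α r A a s < δ) : ∃ x ∈ coverSums α r A a s, x < δ := by
  unfold coverInf at h
  rw [if_pos hne] at h
  exact sInf_lt_iff.mp h

lemma tail0 {x K : ℝ≥0∞} (hK : K ≠ ∞) {c : ℝ} (hc : c < 0)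
    (h : ∀ ℓ : ℝ, 1 ≤ ℓ → x ≤ K * ENNReal.ofReal (ℓ ^ c)) : x = 0 := by
  refine le_antisymm ?_ zero_le
  refine ENNReal.le_of_forall_pos_le_add fun ε hε _ => ?_
  rw [zero_add]
  rcases eq_or_ne K 0 with hK0 | hK0
  · refine le_trans (h 1 le_rfl) ?_
    simp [hK0]
  set k := K.toReal with hk
  have hkpos : 0 < k := ENNReal.toReal_pos hK0 hK
  have hepos : (0:ℝ) < (ε : ℝ) := hε
  set p := -c with hp0
  have hp : 0 < p := by simp only [hp0]; linarith
  set ℓ := max 1 ((k / (ε:ℝ)) ^ p⁻¹) with hℓdef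
  have hℓ1 : (1:ℝ) ≤ ℓ := le_max_left _ _
  have h0 : (0:ℝ) ≤ k / (ε:ℝ) := by positivity
  have hq : (k/(ε:ℝ) : ℝ) ≤ ℓ ^ p := by
    calc (k/(ε:ℝ)) = ((k/(ε:ℝ)) ^ p⁻¹) ^ p := by
          rw [← Real.rpow_mul h0, inv_mul_cancel₀ hp.ne', Real.rpow_one]
      _ ≤ ℓ ^ p := Real.rpow_le_rpow (Real.rpow_nonneg h0 _) (le_max_right _ _) hp.le
  have hℓc : ℓ ^ c ≤ (ε:ℝ) / k := by
    have hcp : c = -p := by simp [hp0]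
    rw [hcp, Real.rpow_neg (by linarith)]
    have hinv : (ℓ ^ p)⁻¹ ≤ (k/(ε:ℝ))⁻¹ := by
      apply inv_anti₀ (div_pos hkpos hepos) hq
    refine hinv.trans ?_
    rw [inv_div]
  refine le_trans (h ℓ hℓ1) ?_
  have hKk : K = ENNReal.ofReal k := (ENNReal.ofReal_toReal hK).symm
  rw [hKk, ← ENNReal.ofReal_mul hkpos.le]
  calc ENNReal.ofReal (k * ℓ ^ c) ≤ ENNReal.ofReal (k * ((ε:ℝ)/k)) := by
        apply ENNReal.ofReal_le_ofReal
        exact mul_le_mul_of_nonneg_left hℓc hkpos.le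
    _ = (ε : ℝ≥0∞) := by
        rw [mul_div_cancel₀ _ hkpos.ne']
        exact ENNReal.ofReal_coe_nnreal

lemma floor_subset_cover {A : Set (EuclideanSpace ℝ (Fin d))} {a : EuclideanSpace ℝ (Fin d)}
    {s : ℝ} {I : Set ℕ} {b : ℕ → EuclideanSpace ℝ (Fin d)} {t : ℕ → ℝ}
    (hcover : A ∩ cube a (s+1) ⊆ ⋃ i ∈ I, cube (b i) (t i)) :
    floorSet A ∩ cube a s ⊆
      ⋃ i ∈ I, (floorSet A ∩ cube (WithLp.toLp 2 (fun j => b i j - 1)) (t i + 1)) := by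
  rintro z ⟨⟨x, hxA, rfl⟩, hzc⟩
  have hx : x ∈ A ∩ cube a (s+1) := by
    refine ⟨hxA, fun j => ?_⟩
    have h1 : a j ≤ ((⌊x j⌋ : ℤ) : ℝ) := (hzc j).1
    have h2 : ((⌊x j⌋ : ℤ) : ℝ) < a j + s := (hzc j).2
    have hfl := Int.floor_le (x j)
    have hfu := Int.lt_floor_add_one (x j)
    exact ⟨by linarith, by linarith⟩
  obtain ⟨i, hi, hxi⟩ := Set.mem_iUnion₂.1 (hcover hx)
  refine Set.mem_iUnion₂.2 ⟨i, hi, ⟨⟨x, hxA, rfl⟩, fun j => ?_⟩⟩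
  have h1 : b i j ≤ x j := (hxi j).1
  have h2 : x j < b i j + t i := (hxi j).2
  have hfl := Int.floor_le (x j)
  have hfu := Int.lt_floor_add_one (x j)
  constructor
  · show b i j - 1 ≤ ((⌊x j⌋ : ℤ) : ℝ)
    linarith
  · show ((⌊x j⌋ : ℤ) : ℝ) < (b i j - 1) + (t i + 1)
    linarith

end aux2
section aux3

variable {d : ℕ}

lemma count_zero_of_bound {γ β : ℝ} (hγβ : γ < β) {A : Set (EuclideanSpace ℝ (Fin d))}
    {K : ℝ≥0∞} (hK : K ≠ ∞)
    (hN : ∀ s : ℝ, 1 ≤ s → ∀ a : EuclideanSpace ℝ (Fin d),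
      ((floorSet A ∩ cube a s).encard : ℝ≥0∞) ≤ K * ENNReal.ofReal (s ^ γ)) :
    countMeas β A = 0 := by
  refine tail0 hK (show γ - β < 0 by linarith) fun ℓ hℓ => ?_
  unfold countMeas
  refine le_trans (iInf_le _ ℓ) ?_
  refine iSup_le fun a => iSup_le fun s => iSup_le fun hs => ?_
  have hs1 : (1:ℝ) ≤ s := le_trans hℓ hs.1
  have hspos : (0:ℝ) < s := by linarith
  have hβpos : ENNReal.ofReal (s ^ β) ≠ 0 := by
    simp only [ne_eq, ENNReal.ofReal_eq_zero, not_le]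
    exact Real.rpow_pos_of_pos hspos β
  rw [ENNReal.div_le_iff hβpos ENNReal.ofReal_ne_top]
  refine le_trans (hN s hs1 a) ?_
  have hsplit : s ^ γ = s ^ (γ - β) * s ^ β := by
    rw [← Real.rpow_add hspos]; ring_nf
  rw [hsplit, ENNReal.ofReal_mul (Real.rpow_nonneg hspos.le _), mul_assoc]
  refine mul_le_mul_right (mul_le_mul_left ?_ _) _
  exact ENNReal.ofReal_le_ofReal
    (Real.rpow_le_rpow_of_nonpos (by linarith) hs.1 (by linarith))

lemma count_top (A : Set (EuclideanSpace ℝ (Fin d))) : countMeas ((d:ℝ)+1) A = 0 := by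
  refine count_zero_of_bound (show (d:ℝ) < (d:ℝ)+1 by linarith)
    (K := ENNReal.ofReal ((2:ℝ)^d)) ENNReal.ofReal_ne_top ?_
  intro s hs a
  refine le_trans (cube_card A a (by linarith)).2 ?_
  rw [← ENNReal.ofReal_mul (by positivity)]
  apply ENNReal.ofReal_le_ofReal
  rw [Real.rpow_natCast]
  calc (s+1)^d ≤ (2*s)^d := pow_le_pow_left₀ (by linarith) (by linarith) d
    _ = 2^d * s^d := mul_pow 2 s d

end aux3
section aux4

variable {d : ℕ}

lemma cov_zero_of_count_zero {α : ℝ} (hα : 0 ≤ α) {A : Set (EuclideanSpace ℝ (Fin d))}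
    (h : countMeas α A = 0) : covMeas α A = 0 := by
  classical
  refine le_antisymm ?_ zero_le
  unfold covMeas
  refine iSup_le fun r => iSup_le fun hr => ?_
  refine ENNReal.le_of_forall_pos_le_add fun ε hε _ => ?_
  rw [zero_add]
  have hepos : (0:ℝ) < (ε:ℝ) := hε
  set δ : ℝ := (ε:ℝ) * (2:ℝ) ^ (-α) with hδdef
  have hδpos : 0 < δ := by positivity
  have hlt : (⨅ ℓ : ℝ, ⨆ a : EuclideanSpace ℝ (Fin d), ⨆ s : ℝ, ⨆ _ : ℓ ≤ s ∧ 0 < s,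
      ((floorSet A ∩ cube a s).encard : ℝ≥0∞) / ENNReal.ofReal (s ^ α)) < ENNReal.ofReal δ := by
    unfold countMeas at h
    rw [h]
    exact ENNReal.ofReal_pos.2 hδpos
  obtain ⟨ℓ0, hℓ0⟩ := iInf_lt_iff.mp hlt
  set L : ℝ := max ℓ0 (max 1 r⁻¹) with hLdef
  refine le_trans (iInf_le _ L) ?_
  refine iSup_le fun a => iSup_le fun s => iSup_le fun hs => ?_
  obtain ⟨hLs, hspos⟩ := hs
  have hs1 : (1:ℝ) ≤ s := le_trans (le_trans (le_max_left _ _) (le_max_right ℓ0 _)) hLs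
  have hrs : 1 ≤ r * s := by
    have hinv : r⁻¹ ≤ s := le_trans (le_trans (le_max_right 1 _) (le_max_right ℓ0 _)) hLs
    calc (1:ℝ) = r * r⁻¹ := (mul_inv_cancel₀ hr.ne').symm
      _ ≤ r * s := mul_le_mul_of_nonneg_left hinv hr.le
  have hℓ0L : ℓ0 ≤ L := le_max_left _ _
  have hℓ0s : ℓ0 ≤ s + 1 := by linarith
  set a' : EuclideanSpace ℝ (Fin d) := WithLp.toLp 2 (fun j => a j - 1) with ha'def
  set F := floorSet A ∩ cube a' (s+1) with hFdef
  have hFfin : F.Finite := (cube_card A a' (by linarith : (0:ℝ) ≤ s + 1)).1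
  have hFb : (F.encard : ℝ≥0∞) ≤ ENNReal.ofReal δ * ENNReal.ofReal ((s+1) ^ α) := by
    have hmem : (F.encard : ℝ≥0∞) / ENNReal.ofReal ((s+1) ^ α) ≤
        ⨆ a'' : EuclideanSpace ℝ (Fin d), ⨆ s' : ℝ, ⨆ _ : ℓ0 ≤ s' ∧ 0 < s',
          ((floorSet A ∩ cube a'' s').encard : ℝ≥0∞) / ENNReal.ofReal (s' ^ α) :=
      le_iSup_of_le a' (le_iSup_of_le (s+1)
        (le_iSup_of_le ⟨hℓ0s, by linarith⟩ le_rfl))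
    have hlt2 := lt_of_le_of_lt hmem hℓ0
    have hne : ENNReal.ofReal ((s+1) ^ α) ≠ 0 := by
      simp only [ne_eq, ENNReal.ofReal_eq_zero, not_le]
      exact Real.rpow_pos_of_pos (by linarith) α
    exact (ENNReal.div_le_iff hne ENNReal.ofReal_ne_top).1 hlt2.le
  set n := hFfin.toFinset.card with hndef
  set eqv := hFfin.toFinset.equivFin with heqv
  set b : ℕ → EuclideanSpace ℝ (Fin d) :=
    fun k => if hk : k < n then ((eqv.symm ⟨k, hk⟩ : hFfin.toFinset) : EuclideanSpace ℝ (Fin d))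
      else a with hbdef
  have hcov : A ∩ cube a s ⊆ ⋃ i ∈ (↑(Finset.range n) : Set ℕ),
      cube (b i) ((fun _ => (1:ℝ)) i) := by
    intro x hx
    have hzF : floorPt x ∈ F := by
      refine ⟨⟨x, hx.1, rfl⟩, fun j => ?_⟩
      have h1 : a j ≤ x j := (hx.2 j).1
      have h2 : x j < a j + s := (hx.2 j).2
      have hfl := Int.floor_le (x j)
      have hfu := Int.lt_floor_add_one (x j)
      constructor
      · show a j - 1 ≤ ((⌊x j⌋:ℤ):ℝ); linarith
      · show ((⌊x j⌋:ℤ):ℝ) < (a j - 1) + (s+1); linarith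
    have hzmem : floorPt x ∈ hFfin.toFinset := hFfin.mem_toFinset.2 hzF
    set k := eqv ⟨floorPt x, hzmem⟩ with hkdef
    have hbk : b k.1 = floorPt x := by
      rw [hbdef]
      simp only
      rw [dif_pos k.isLt]
      have hketa : (⟨k.1, k.isLt⟩ : Fin n) = k := rfl
      rw [hketa, Equiv.symm_apply_apply]
    refine Set.mem_iUnion₂.2 ⟨k.1, Finset.mem_coe.2 (Finset.mem_range.2 k.isLt), fun j => ?_⟩
    show b k.1 j ≤ x j ∧ x j < b k.1 j + 1
    rw [hbk]
    exact ⟨Int.floor_le _, Int.lt_floor_add_one _⟩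
  set x0 : ℝ≥0∞ := ∑' i : (↑(Finset.range n) : Set ℕ),
    ENNReal.ofReal ((((fun _ => (1:ℝ)) (i:ℕ)) / s) ^ α) with hx0
  have hx0mem : x0 ∈ coverSums α r A a s :=
    ⟨(↑(Finset.range n) : Set ℕ), b, fun _ => 1, hcov, fun i _ => ⟨le_rfl, hrs⟩, rfl⟩
  have hx0val : x0 = (n : ℝ≥0∞) * ENNReal.ofReal ((1 / s) ^ α) := by
    have h1 : x0 = ∑ _x ∈ Finset.range n, ENNReal.ofReal ((1/s) ^ α) :=
      Finset.tsum_subtype (Finset.range n) (fun _ => ENNReal.ofReal ((1 / s) ^ α))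
    rw [h1, Finset.sum_const, Finset.card_range, nsmul_eq_mul]
  refine le_trans (coverInf_le hx0mem) ?_
  rw [hx0val]
  have hnF : (n : ℝ≥0∞) = (F.encard : ℝ≥0∞) := by
    rw [hFfin.encard_eq_coe_toFinset_card]; simp [hndef]
  rw [hnF]
  calc (F.encard : ℝ≥0∞) * ENNReal.ofReal ((1/s) ^ α)
      ≤ (ENNReal.ofReal δ * ENNReal.ofReal ((s+1) ^ α)) * ENNReal.ofReal ((1/s) ^ α) :=
        mul_le_mul_left hFb _
    _ = ENNReal.ofReal (δ * ((s+1) ^ α * (1/s) ^ α)) := by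
        rw [← ENNReal.ofReal_mul (by positivity), ← ENNReal.ofReal_mul (by positivity),
          mul_assoc]
    _ ≤ ENNReal.ofReal (δ * 2 ^ α) := by
        apply ENNReal.ofReal_le_ofReal
        refine mul_le_mul_of_nonneg_left ?_ hδpos.le
        rw [← Real.mul_rpow (by linarith) (by positivity)]
        refine Real.rpow_le_rpow (by positivity) ?_ hα
        rw [mul_one_div, div_le_iff₀ hspos]
        linarith
    _ = (ε : ℝ≥0∞) := by
        rw [hδdef, mul_assoc, ← Real.rpow_add two_pos, neg_add_cancel, Real.rpow_zero,
          mul_one, ENNReal.ofReal_coe_nnreal]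

end aux4
section aux5

variable {d : ℕ}

lemma keybound {α γ : ℝ} (hα : 0 ≤ α) (hαγ : α < γ) {A : Set (EuclideanSpace ℝ (Fin d))}
    (hcov : covMeas α A = 0) :
    ∃ K : ℝ≥0∞, K ≠ ∞ ∧ ∀ s : ℝ, 1 ≤ s → ∀ a : EuclideanSpace ℝ (Fin d),
      ((floorSet A ∩ cube a s).encard : ℝ≥0∞) ≤ K * ENNReal.ofReal (s ^ γ) := by
  classical
  have hγ0 : 0 ≤ γ := le_trans hα hαγ.le
  set r : ℝ := 4⁻¹ with hrdef
  have hrpos : (0:ℝ) < r := by norm_num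
  set δ : ℝ := (4:ℝ) ^ (-α) with hδdef
  have hδpos : 0 < δ := Real.rpow_pos_of_pos (by norm_num) _
  have hinner : (⨅ ℓ : ℝ, ⨆ a : EuclideanSpace ℝ (Fin d), ⨆ s : ℝ, ⨆ _ : ℓ ≤ s ∧ 0 < s,
      coverInf α r A a s) < ENNReal.ofReal δ := by
    have hle : (⨅ ℓ : ℝ, ⨆ a : EuclideanSpace ℝ (Fin d), ⨆ s : ℝ, ⨆ _ : ℓ ≤ s ∧ 0 < s,
        coverInf α r A a s) ≤ covMeas α A := by
      unfold covMeas
      exact le_iSup_of_le r (le_iSup_of_le hrpos le_rfl)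
    rw [hcov] at hle
    exact lt_of_le_of_lt hle (ENNReal.ofReal_pos.2 hδpos)
  obtain ⟨ℓ0, hℓ0⟩ := iInf_lt_iff.mp hinner
  set L : ℝ := max ℓ0 10 with hLdef
  have hL10 : (10:ℝ) ≤ L := le_max_right _ _
  have key : ∀ (a : EuclideanSpace ℝ (Fin d)) (s : ℝ), L ≤ s →
      coverInf α r A a (s+1) < ENNReal.ofReal δ := by
    intro a s hLs
    refine lt_of_le_of_lt ?_ hℓ0
    exact le_iSup_of_le a (le_iSup_of_le (s+1)
      (le_iSup_of_le ⟨by linarith [le_max_left ℓ0 10], by linarith⟩ le_rfl))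
  set K : ℝ≥0∞ := ENNReal.ofReal ((L+2) ^ d) with hKdef
  have hKtop : K ≠ ∞ := ENNReal.ofReal_ne_top
  have main : ∀ n : ℕ, ∀ s : ℝ, 1 ≤ s → s ≤ L + n → ∀ a : EuclideanSpace ℝ (Fin d),
      ((floorSet A ∩ cube a s).encard : ℝ≥0∞) ≤ K * ENNReal.ofReal (s ^ γ) := by
    intro n
    induction n with
    | zero =>
        intro s hs1 hsL a
        have hbase := (cube_card A a (by linarith : (0:ℝ) ≤ s)).2
        refine hbase.trans ?_
        have hsL' : s ≤ L := by push_cast at hsL; linarith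
        have h1 : ENNReal.ofReal ((s+1)^d) ≤ K := by
          rw [hKdef]
          exact ENNReal.ofReal_le_ofReal (pow_le_pow_left₀ (by linarith) (by linarith) d)
        refine h1.trans ?_
        refine le_mul_of_one_le_right zero_le ?_
        rw [← ENNReal.ofReal_one]
        apply ENNReal.ofReal_le_ofReal
        calc (1:ℝ) = s ^ (0:ℝ) := (Real.rpow_zero s).symm
          _ ≤ s ^ γ := Real.rpow_le_rpow_of_exponent_le hs1 hγ0
    | succ n ih =>
        intro s hs1 hsL a
        by_cases hcase : s ≤ L + (n:ℕ)
        · exact ih s hs1 hcase a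
        push_neg at hcase
        have hn0 : (0:ℝ) ≤ (n:ℕ) := Nat.cast_nonneg n
        have hLs : L ≤ s := by linarith
        have hs10 : (10:ℝ) ≤ s := le_trans hL10 hLs
        have hs1pos : (0:ℝ) < s + 1 := by linarith
        have hsLn : s ≤ L + (n:ℕ) + 1 := by push_cast at hsL; linarith
        have hrs1 : 1 ≤ r * (s+1) := by rw [hrdef]; linarith
        obtain ⟨x, hxmem, hxlt⟩ :=
          exists_cover (coverSums_nonempty α r A a hrs1) (key a s hLs)
        obtain ⟨I, b, t, hcover, hts, hxval⟩ := hxmem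
        have hinc : floorSet A ∩ cube a s ⊆
            ⋃ i ∈ I, (floorSet A ∩ cube (WithLp.toLp 2 (fun j => b i j - 1)) (t i + 1)) :=
          floor_subset_cover hcover
        rw [Set.biUnion_eq_iUnion] at hinc
        have hfin0 : (floorSet A ∩ cube a s).Finite := (cube_card A a (by linarith)).1
        have hfini : ∀ i : I,
            (floorSet A ∩ cube (WithLp.toLp 2 (fun j => b (i:ℕ) j - 1)) (t (i:ℕ) + 1)).Finite := by
          intro i
          have ht1 : 1 ≤ t (i:ℕ) := (hts _ i.2).1
          exact (cube_card A _ (by linarith)).1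
        have hstep1 := encard_le_tsum_of_subset _ hfin0 hfini hinc
        refine hstep1.trans ?_
        have hC : (0:ℝ) ≤ (2:ℝ)^γ * (s+1)^γ * r^(γ-α) :=
          mul_nonneg (mul_nonneg (Real.rpow_nonneg (by norm_num) _)
            (Real.rpow_nonneg hs1pos.le _)) (Real.rpow_nonneg hrpos.le _)
        have hterm : ∀ i : I,
            ((floorSet A ∩ cube (WithLp.toLp 2 (fun j => b (i:ℕ) j - 1)) (t (i:ℕ) + 1)).encard : ℝ≥0∞) ≤
            (K * ENNReal.ofReal ((2:ℝ)^γ * (s+1)^γ * r^(γ-α))) *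
              ENNReal.ofReal ((t (i:ℕ) / (s+1)) ^ α) := by
          intro i
          have ht1 : 1 ≤ t (i:ℕ) := (hts _ i.2).1
          have ht2 : t (i:ℕ) ≤ r * (s+1) := (hts _ i.2).2
          have hts' : t (i:ℕ) + 1 ≤ L + (n:ℕ) := by
            rw [hrdef] at ht2
            linarith
          have hIH := ih (t (i:ℕ) + 1) (by linarith) hts' (WithLp.toLp 2 (fun j => b (i:ℕ) j - 1))
          refine hIH.trans ?_
          rw [mul_assoc, ← ENNReal.ofReal_mul hC]
          refine mul_le_mul_right (ENNReal.ofReal_le_ofReal ?_) _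
          set u := t (i:ℕ) / (s+1) with hudef
          have hupos : 0 < u := div_pos (by linarith) hs1pos
          have hur : u ≤ r := (div_le_iff₀ hs1pos).2 (by linarith)
          have e1 : (t (i:ℕ) + 1) ^ γ ≤ (2 * t (i:ℕ)) ^ γ :=
            Real.rpow_le_rpow (by linarith) (by linarith) hγ0
          have e2 : ((2:ℝ) * t (i:ℕ)) ^ γ = 2^γ * (t (i:ℕ))^γ :=
            Real.mul_rpow (by norm_num) (by linarith)
          have e3 : t (i:ℕ) = (s+1) * u := by
            rw [hudef]; field_simp
          have e4 : (t (i:ℕ))^γ = (s+1)^γ * u^γ := by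
            rw [e3, Real.mul_rpow hs1pos.le hupos.le]
          have e5 : u^γ = u^α * u^(γ-α) := by
            rw [← Real.rpow_add hupos]; ring_nf
          have e6 : u^(γ-α) ≤ r^(γ-α) :=
            Real.rpow_le_rpow hupos.le hur (by linarith)
          calc (t (i:ℕ) + 1) ^ γ ≤ 2^γ * ((s+1)^γ * (u^α * u^(γ-α))) := by
                rw [← e5, ← e4, ← e2]; exact e1
            _ ≤ 2^γ * ((s+1)^γ * (u^α * r^(γ-α))) := by
                refine mul_le_mul_of_nonneg_left ?_ (Real.rpow_nonneg (by norm_num) γ)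
                refine mul_le_mul_of_nonneg_left ?_ (Real.rpow_nonneg hs1pos.le γ)
                exact mul_le_mul_of_nonneg_left e6 (Real.rpow_nonneg hupos.le α)
            _ = 2^γ * (s+1)^γ * r^(γ-α) * u^α := by ring
        have hfinal : (2:ℝ)^γ * (s+1)^γ * r^(γ-α) * δ ≤ s ^ γ := by
          have f1 : ((s:ℝ)+1)^γ ≤ (2*s)^γ :=
            Real.rpow_le_rpow (by linarith) (by linarith) hγ0
          have f2 : ((2:ℝ)*s)^γ = 2^γ * s^γ := Real.mul_rpow (by norm_num) (by linarith)
          have h4γ : (4:ℝ)^(γ-α) * (4:ℝ)^α = 4^γ := by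
            rw [← Real.rpow_add (by norm_num)]; ring_nf
          have h22 : (2:ℝ)^γ * 2^γ = 4^γ := by
            rw [← Real.mul_rpow (by norm_num) (by norm_num)]; norm_num
          have hr4 : r^(γ-α) = ((4:ℝ)^(γ-α))⁻¹ := by
            rw [hrdef, Real.inv_rpow (by norm_num)]
          have hδ4 : δ = ((4:ℝ)^α)⁻¹ := by
            rw [hδdef, Real.rpow_neg (by norm_num)]
          have hpos1 : (0:ℝ) < 4^(γ-α) := Real.rpow_pos_of_pos (by norm_num) _
          have hpos2 : (0:ℝ) < 4^α := Real.rpow_pos_of_pos (by norm_num) _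
          have hone : (4:ℝ)^γ * ((4:ℝ)^(γ-α))⁻¹ * ((4:ℝ)^α)⁻¹ = 1 := by
            rw [← h4γ]; field_simp
          rw [hr4, hδ4]
          calc (2:ℝ)^γ * (s+1)^γ * ((4:ℝ)^(γ-α))⁻¹ * ((4:ℝ)^α)⁻¹
              ≤ 2^γ * (2^γ * s^γ) * ((4:ℝ)^(γ-α))⁻¹ * ((4:ℝ)^α)⁻¹ := by
                refine mul_le_mul_of_nonneg_right ?_ (by positivity)
                refine mul_le_mul_of_nonneg_right ?_ (by positivity)
                exact mul_le_mul_of_nonneg_left (f1.trans_eq f2)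
                  (Real.rpow_nonneg (by norm_num) γ)
            _ = s^γ * ((4:ℝ)^γ * ((4:ℝ)^(γ-α))⁻¹ * ((4:ℝ)^α)⁻¹) := by
                rw [show (2:ℝ)^γ * (2^γ * s^γ) = (4:ℝ)^γ * s^γ by rw [← mul_assoc, h22]]
                ring
            _ = s^γ := by rw [hone, mul_one]
        calc (∑' i : I,
              ((floorSet A ∩ cube (WithLp.toLp 2 (fun j => b (i:ℕ) j - 1)) (t (i:ℕ) + 1)).encard : ℝ≥0∞))
            ≤ ∑' i : I, ((K * ENNReal.ofReal ((2:ℝ)^γ * (s+1)^γ * r^(γ-α))) *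
                ENNReal.ofReal ((t (i:ℕ) / (s+1)) ^ α)) := ENNReal.tsum_le_tsum hterm
          _ = (K * ENNReal.ofReal ((2:ℝ)^γ * (s+1)^γ * r^(γ-α))) *
                ∑' i : I, ENNReal.ofReal ((t (i:ℕ) / (s+1)) ^ α) := ENNReal.tsum_mul_left
          _ = (K * ENNReal.ofReal ((2:ℝ)^γ * (s+1)^γ * r^(γ-α))) * x := by rw [← hxval]
          _ ≤ (K * ENNReal.ofReal ((2:ℝ)^γ * (s+1)^γ * r^(γ-α))) * ENNReal.ofReal δ :=
                mul_le_mul_right hxlt.le _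
          _ = K * ENNReal.ofReal ((2:ℝ)^γ * (s+1)^γ * r^(γ-α) * δ) := by
                rw [mul_assoc, ← ENNReal.ofReal_mul hC]
          _ ≤ K * ENNReal.ofReal (s ^ γ) :=
                mul_le_mul_right (ENNReal.ofReal_le_ofReal hfinal) _
  refine ⟨K, hKtop, fun s hs1 a => ?_⟩
  have hn : s ≤ L + (⌈s⌉₊ : ℕ) := by
    have h1 := Nat.le_ceil s
    push_cast at h1 ⊢
    linarith
  exact main ⌈s⌉₊ s hs1 hn a

end aux5
section aux6

variable {d : ℕ}

lemma count_zero_of_cov_zero {α β : ℝ} (hα : 0 ≤ α) (hαβ : α < β)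
    {A : Set (EuclideanSpace ℝ (Fin d))} (hcov : covMeas α A = 0) : countMeas β A = 0 := by
  obtain ⟨K, hK, hN⟩ := keybound hα (show α < (α+β)/2 by linarith) hcov
  exact count_zero_of_bound (show (α+β)/2 < β by linarith) hK hN

end aux6

/-- The covering dimension coincides with the counting dimension. -/
theorem stmt_5 (d : ℕ) (A : Set (EuclideanSpace ℝ (Fin d))) :
    covdim A = cdim A := by
  have h1 : {α : ℝ | 0 ≤ α ∧ countMeas α A = 0} ⊆ {α : ℝ | 0 ≤ α ∧ covMeas α A = 0} :=
    fun α hα => ⟨hα.1, cov_zero_of_count_zero hα.1 hα.2⟩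
  have hc_ne : ((d:ℝ)+1) ∈ {α : ℝ | 0 ≤ α ∧ countMeas α A = 0} :=
    ⟨by positivity, count_top A⟩
  have hbddc : BddBelow {α : ℝ | 0 ≤ α ∧ countMeas α A = 0} := ⟨0, fun x hx => hx.1⟩
  have hbddh : BddBelow {α : ℝ | 0 ≤ α ∧ covMeas α A = 0} := ⟨0, fun x hx => hx.1⟩
  unfold covdim cdim
  refine le_antisymm ?_ ?_
  · exact csInf_le_csInf hbddh ⟨_, hc_ne⟩ h1
  · refine le_csInf ⟨_, h1 hc_ne⟩ fun α hα => ?_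
    refine le_of_forall_pos_le_add fun ε hε => ?_
    exact csInf_le hbddc
      ⟨by linarith [hα.1], count_zero_of_cov_zero hα.1 (by linarith) hα.2⟩

end
end

section
/- For all d, k ≥ 1, K ≥ 1 and M ≥ 0, there exists a constant c = c(k,d,K,M) > 0 such that for every metrically bounded set B ⊆ ℝ^k and every (K,M)-quasi-isometric embedding f : B → ℝ^d, one has |⌊B⌋| ≤ c · |⌊f(B)⌋|, where |·| denotes cardinality (both sets being finite since B is bounded). -/
open Set MeasureTheory Filter
open scoped ENNReal NNReal

noncomputable section

variable {ι : Type*} [Fintype ι]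

/-- `f` is a `(K,M)`-quasi-isometric embedding of `B` (with the Euclidean metrics). -/
def QIEOn {ι κ : Type*} [Fintype ι] [Fintype κ] (K M : ℝ) (B : Set (EuclideanSpace ℝ ι))
    (f : EuclideanSpace ℝ ι → EuclideanSpace ℝ κ) : Prop :=
  ∀ x₁ ∈ B, ∀ x₂ ∈ B,
    (1 / K) * dist x₁ x₂ - M ≤ dist (f x₁) (f x₂) ∧ dist (f x₁) (f x₂) ≤ K * dist x₁ x₂ + M

set_option linter.unusedSectionVars false in
lemma coord_dist_le (x y : EuclideanSpace ℝ ι) (i : ι) : |x i - y i| ≤ dist x y := by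
  rw [EuclideanSpace.dist_eq]
  have h1 : |x i - y i| = Real.sqrt (dist (x i) (y i) ^ 2) := by
    rw [Real.sqrt_sq dist_nonneg, Real.dist_eq]
  rw [h1]
  apply Real.sqrt_le_sqrt
  exact Finset.single_le_sum (f := fun j => dist (x j) (y j) ^ 2) (fun j _ => sq_nonneg _) (Finset.mem_univ i)

lemma dist_le_sqrt_card (x y : EuclideanSpace ℝ ι) (h : ∀ i, |x i - y i| ≤ 1) :
    dist x y ≤ Real.sqrt (Fintype.card ι) := by
  rw [EuclideanSpace.dist_eq]
  apply Real.sqrt_le_sqrt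
  calc ∑ i, dist (x i) (y i) ^ 2 ≤ ∑ _i : ι, (1:ℝ) := by
        apply Finset.sum_le_sum
        intro i _
        have : dist (x i) (y i) ≤ 1 := by rw [Real.dist_eq]; exact h i
        nlinarith [dist_nonneg (x := x i) (y := y i)]
    _ = Fintype.card ι := by simp

lemma dist_floorPt_le (x : EuclideanSpace ℝ ι) :
    dist x (floorPt x) ≤ Real.sqrt (Fintype.card ι) := by
  apply dist_le_sqrt_card
  intro i
  have hfp : floorPt x i = (⌊x i⌋ : ℝ) := rfl
  have h1 := Int.floor_le (x i)
  have h2 := Int.lt_floor_add_one (x i)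
  rw [hfp, abs_le]
  constructor <;> linarith

lemma dist_le_of_floorPt_eq {x y : EuclideanSpace ℝ ι} (h : floorPt x = floorPt y) :
    dist x y ≤ Real.sqrt (Fintype.card ι) := by
  apply dist_le_sqrt_card
  intro i
  have hi : (⌊x i⌋ : ℝ) = (⌊y i⌋ : ℝ) := congrArg (fun v : EuclideanSpace ℝ ι => v i) h
  have h1 := Int.floor_le (x i)
  have h2 := Int.lt_floor_add_one (x i)
  have h3 := Int.floor_le (y i)
  have h4 := Int.lt_floor_add_one (y i)
  rw [abs_le]; constructor <;> linarith

lemma floorSet_coord_int {A : Set (EuclideanSpace ℝ ι)} {p : EuclideanSpace ℝ ι}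
    (hp : p ∈ floorSet A) (i : ι) : ((⌊p i⌋ : ℤ) : ℝ) = p i := by
  obtain ⟨x, _, rfl⟩ := hp
  show ((⌊((⌊x i⌋ : ℤ) : ℝ)⌋ : ℤ) : ℝ) = _
  rw [Int.floor_intCast]; rfl

lemma floorSet_finite {A : Set (EuclideanSpace ℝ ι)} (hA : Bornology.IsBounded A) :
    (floorSet A).Finite := by
  classical
  obtain ⟨r, hr⟩ := hA.subset_closedBall 0
  set N : ℤ := ⌈r⌉ + 1 with hN
  set φ : EuclideanSpace ℝ ι → (ι → ℤ) := fun p i => ⌊p i⌋ with hφ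
  have hmaps : ∀ p ∈ floorSet A, φ p ∈ (Fintype.piFinset fun _ : ι => Finset.Icc (-N) N : Finset (ι → ℤ)) := by
    rintro p ⟨x, hx, rfl⟩
    rw [Fintype.mem_piFinset]
    intro i
    have hd : dist x 0 ≤ r := by simpa using hr hx
    have hxi : |x i - (0 : EuclideanSpace ℝ ι) i| ≤ dist x 0 := coord_dist_le x 0 i
    have h0 : (0 : EuclideanSpace ℝ ι) i = 0 := rfl
    rw [h0, sub_zero] at hxi
    have h1 := Int.floor_le (x i)
    have h2 := Int.lt_floor_add_one (x i)
    have hceil : r ≤ (⌈r⌉ : ℝ) := Int.le_ceil r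
    have habs := abs_le.mp (hxi.trans hd)
    have hfl : φ (floorPt x) i = ⌊x i⌋ := by
      show ⌊((⌊x i⌋ : ℤ) : ℝ)⌋ = ⌊x i⌋
      rw [Int.floor_intCast]
    rw [hfl, Finset.mem_Icc]
    constructor
    · have : ((-N : ℤ) : ℝ) ≤ (⌊x i⌋ : ℝ) := by push_cast [hN]; linarith
      exact_mod_cast this
    · have : ((⌊x i⌋ : ℤ) : ℝ) ≤ ((N : ℤ) : ℝ) := by push_cast [hN]; linarith
      exact_mod_cast this
  have hinj : Set.InjOn φ (floorSet A) := by
    intro p hp q hq hpq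
    refine PiLp.ext fun i => ?_
    have := congrFun hpq i
    have h1 := floorSet_coord_int hp i
    have h2 := floorSet_coord_int hq i
    rw [← h1, ← h2]
    exact_mod_cast this
  exact Set.Finite.of_finite_image (Set.Finite.subset (Fintype.piFinset fun _ : ι => Finset.Icc (-N) N).finite_toSet (by rintro _ ⟨p, hp, rfl⟩; exact hmaps p hp)) hinj

/-- For bounded `B ⊆ ℝ^k` and `(K,M)`-quasi-isometric embeddings `f : B → ℝ^d`, the
cardinality of `⌊B⌋` is bounded by a constant (depending only on `k, d, K, M`) times the
cardinality of `⌊f(B)⌋`. -/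
theorem stmt_6 (k d : ℕ) (hk : 1 ≤ k) (hd : 1 ≤ d) (K M : ℝ) (hK : 1 ≤ K) (hM : 0 ≤ M) :
    ∃ c > (0 : ℝ), ∀ (B : Set (EuclideanSpace ℝ (Fin k)))
      (f : EuclideanSpace ℝ (Fin k) → EuclideanSpace ℝ (Fin d)),
      Bornology.IsBounded B → QIEOn K M B f →
      ((floorSet B).ncard : ℝ) ≤ c * ((floorSet (f '' B)).ncard : ℝ) := by
  classical
  have hK0 : (0:ℝ) < K := lt_of_lt_of_le one_pos hK
  set R : ℝ := K * (Real.sqrt d + M) + 2 * Real.sqrt k with hR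
  have hR0 : 0 ≤ R := by positivity
  set N : ℤ := ⌈R⌉ with hNdef
  have hN0 : 0 ≤ N := by positivity
  set cF : Finset (Fin k → ℤ) := Fintype.piFinset fun _ => Finset.Icc (-N) N with hcF
  have hcFpos : 0 < cF.card := by
    rw [Finset.card_pos]
    exact ⟨fun _ => 0, by rw [Fintype.mem_piFinset]; intro i; rw [Finset.mem_Icc]; omega⟩
  refine ⟨cF.card, by exact_mod_cast hcFpos, ?_⟩
  intro B f hB hf
  rcases eq_empty_or_nonempty B with rfl | ⟨b₀, hb₀⟩
  · simp [floorSet]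
  -- finiteness
  have hSfin : (floorSet B).Finite := floorSet_finite hB
  have hfB : Bornology.IsBounded (f '' B) := by
    obtain ⟨C, hC⟩ := Metric.isBounded_iff.mp hB
    apply Metric.isBounded_iff.mpr
    refine ⟨K * C + M, ?_⟩
    rintro _ ⟨x, hx, rfl⟩ _ ⟨y, hy, rfl⟩
    have h1 := (hf x hx y hy).2
    have h2 := hC hx hy
    nlinarith
  have hTfin : (floorSet (f '' B)).Finite := floorSet_finite hfB
  -- witness function
  set w : EuclideanSpace ℝ (Fin k) → EuclideanSpace ℝ (Fin k) :=
    fun p => if h : ∃ x, x ∈ B ∧ floorPt x = p then h.choose else 0 with hw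
  have hwspec : ∀ p ∈ floorSet B, w p ∈ B ∧ floorPt (w p) = p := by
    rintro p ⟨x, hx, rfl⟩
    have h : ∃ y, y ∈ B ∧ floorPt y = floorPt x := ⟨x, hx, rfl⟩
    simp only [hw, dif_pos h]
    exact h.choose_spec
  set g : EuclideanSpace ℝ (Fin k) → EuclideanSpace ℝ (Fin d) := fun p => floorPt (f (w p)) with hg
  set S : Finset (EuclideanSpace ℝ (Fin k)) := hSfin.toFinset with hS
  set T : Finset (EuclideanSpace ℝ (Fin d)) := hTfin.toFinset with hT
  have himg : S.image g ⊆ T := by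
    intro q hq
    obtain ⟨p, hp, rfl⟩ := Finset.mem_image.mp hq
    have hp' : p ∈ floorSet B := hSfin.mem_toFinset.mp hp
    obtain ⟨hwB, -⟩ := hwspec p hp'
    exact hTfin.mem_toFinset.mpr ⟨f (w p), ⟨w p, hwB, rfl⟩, rfl⟩
  have hfiber : ∀ q ∈ S.image g, (S.filter fun p => g p = q).card ≤ cF.card := by
    intro q hq
    obtain ⟨p₀, hp₀S, hp₀q⟩ := Finset.mem_image.mp hq
    apply Finset.card_le_card_of_injOn (fun p i => ⌊p i⌋ - ⌊p₀ i⌋)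
    · intro p hp
      rw [Finset.mem_coe, Finset.mem_filter] at hp
      obtain ⟨hpS, hpq⟩ := hp
      have hp' : p ∈ floorSet B := hSfin.mem_toFinset.mp hpS
      have hp₀' : p₀ ∈ floorSet B := hSfin.mem_toFinset.mp hp₀S
      obtain ⟨hwB, hwfl⟩ := hwspec p hp'
      obtain ⟨hwB₀, hwfl₀⟩ := hwspec p₀ hp₀'
      -- same image floor
      have hgeq : floorPt (f (w p)) = floorPt (f (w p₀)) := by
        rw [show floorPt (f (w p)) = g p from rfl, show floorPt (f (w p₀)) = g p₀ from rfl, hpq, hp₀q]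
      have hdf : dist (f (w p)) (f (w p₀)) ≤ Real.sqrt d := by
        have := dist_le_of_floorPt_eq hgeq
        simpa using this
      have hdx : dist (w p) (w p₀) ≤ K * (Real.sqrt d + M) := by
        have h1 := (hf (w p) hwB (w p₀) hwB₀).1
        have h2 : (1 / K) * dist (w p) (w p₀) - M ≤ Real.sqrt d := le_trans h1 hdf
        have h3 : dist (w p) (w p₀) ≤ K * (Real.sqrt d + M) := by
          rw [div_mul_eq_mul_div, one_mul, sub_le_iff_le_add] at h2
          calc dist (w p) (w p₀) = K * (dist (w p) (w p₀) / K) := by field_simp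
            _ ≤ K * (Real.sqrt d + M) := by
                apply mul_le_mul_of_nonneg_left _ (le_of_lt hK0)
                linarith
        exact h3
      have hdp : dist p p₀ ≤ R := by
        have h1 : dist (w p) p ≤ Real.sqrt k := by
          have := dist_floorPt_le (w p); rw [hwfl] at this; simpa using this
        have h2 : dist (w p₀) p₀ ≤ Real.sqrt k := by
          have := dist_floorPt_le (w p₀); rw [hwfl₀] at this; simpa using this
        calc dist p p₀ ≤ dist p (w p) + dist (w p) (w p₀) + dist (w p₀) p₀ :=
              dist_triangle4 p (w p) (w p₀) p₀
          _ ≤ Real.sqrt k + K * (Real.sqrt d + M) + Real.sqrt k := by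
              rw [dist_comm p (w p)]; gcongr
          _ = R := by rw [hR]; ring
      rw [Finset.mem_coe, Fintype.mem_piFinset]
      intro i
      have hco : |p i - p₀ i| ≤ R := (coord_dist_le p p₀ i).trans hdp
      have e1 := floorSet_coord_int hp' i
      have e2 := floorSet_coord_int hp₀' i
      rw [Finset.mem_Icc]
      have habs := abs_le.mp hco
      have hceil : R ≤ (N : ℝ) := Int.le_ceil R
      constructor
      · have : ((-N : ℤ) : ℝ) ≤ ((⌊p i⌋ - ⌊p₀ i⌋ : ℤ) : ℝ) := by push_cast; linarith
        exact_mod_cast this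
      · have : ((⌊p i⌋ - ⌊p₀ i⌋ : ℤ) : ℝ) ≤ ((N : ℤ) : ℝ) := by push_cast; linarith
        exact_mod_cast this
    · intro p hp p' hp' hpp
      rw [Finset.coe_filter] at hp hp'
      have h1 : p ∈ floorSet B := hSfin.mem_toFinset.mp hp.1
      have h2 : p' ∈ floorSet B := hSfin.mem_toFinset.mp hp'.1
      refine PiLp.ext fun i => ?_
      have h3 : ⌊p i⌋ - ⌊p₀ i⌋ = ⌊p' i⌋ - ⌊p₀ i⌋ := congrFun hpp i
      have e1 := floorSet_coord_int h1 i
      have e2 := floorSet_coord_int h2 i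
      have h4 : (⌊p i⌋ : ℤ) = ⌊p' i⌋ := by omega
      rw [← e1, ← e2, h4]
  have hmain : S.card ≤ cF.card * T.card := by
    calc S.card ≤ cF.card * (S.image g).card := Finset.card_le_mul_card_image S cF.card hfiber
      _ ≤ cF.card * T.card := by
          apply Nat.mul_le_mul_left
          exact Finset.card_le_card himg
  have hS' : (floorSet B).ncard = S.card := by exact Set.ncard_eq_toFinset_card _ hSfin
  have hT' : (floorSet (f '' B)).ncard = T.card := by exact Set.ncard_eq_toFinset_card _ hTfin
  rw [hS', hT']
  exact_mod_cast hmain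


end
end

section
/- Let R ⊆ ℝ^k be a linear subspace and T : R → ℝ^d an injective linear transformation (so T : R → T(R) is invertible), and set K = max(∥T∥, ∥T⁻¹∥) where ∥·∥ is the operator norm. For all α ≥ 0, there is a constant c = c(α,k,d,K) ≥ 1 such that for every A ⊆ R, C^α(A) ≤ c·C^α(T(A)) and C^α(T(A)) ≤ c·C^α(A). In particular, A is α-counting regular if and only if T(A) is α-counting regular, and cdim(A) = cdim(T(A)). The same conclusions hold for the mass measures M^α and the mass dimension mdim. -/
open Set MeasureTheory Filter
open scoped ENNReal NNReal

noncomputable section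

variable {ι : Type*} [Fintype ι]

lemma encard_le_mul_of_fibers {γ δ : Type*} (s : Set γ) (t : Set δ) (f : γ → δ) (m : ℕ)
    (hmap : ∀ x ∈ s, f x ∈ t) (hfib : ∀ y, {x ∈ s | f x = y}.encard ≤ m) :
    s.encard ≤ m * t.encard := by
  rcases eq_or_ne m 0 with rfl | hm
  · have hs : s = ∅ := by
      ext x
      simp only [mem_empty_iff_false, iff_false]
      intro hx
      have h1 := hfib (f x)
      have h2 : x ∈ {b ∈ s | f b = f x} := ⟨hx, rfl⟩
      have h1' : {b ∈ s | f b = f x} = ∅ := by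
        rw [← Set.encard_eq_zero]
        exact le_antisymm (by exact_mod_cast h1) zero_le
      rw [h1'] at h2
      exact h2
    simp [hs]
  rcases t.finite_or_infinite with ht | ht
  · refine Set.Finite.induction_on
      (motive := fun t _ => ∀ s : Set γ, (∀ x ∈ s, f x ∈ t) →
        (∀ y, {x ∈ s | f x = y}.encard ≤ m) → s.encard ≤ m * t.encard)
      t ht ?_ ?_ s hmap hfib
    · intro s hmap' _
      have : s = ∅ := eq_empty_of_forall_notMem fun x hx => (hmap' x hx)
      simp [this]
    · intro y t' hy hft' ih s hmap' hfib'
      have hsub : s ⊆ {x ∈ s | f x = y} ∪ {x ∈ s | f x ∈ t'} := by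
        intro x hx
        rcases (mem_insert_iff.1 (hmap' x hx)) with h | h
        · exact Or.inl ⟨hx, h⟩
        · exact Or.inr ⟨hx, h⟩
      have h2 : {x ∈ s | f x ∈ t'}.encard ≤ m * t'.encard := by
        refine ih _ (fun x hx => hx.2) (fun y' => le_trans (encard_le_encard ?_) (hfib' y'))
        intro x hx
        exact ⟨hx.1.1, hx.2⟩
      calc s.encard ≤ ({x ∈ s | f x = y} ∪ {x ∈ s | f x ∈ t'}).encard := encard_le_encard hsub
        _ ≤ {x ∈ s | f x = y}.encard + {x ∈ s | f x ∈ t'}.encard := encard_union_le _ _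
        _ ≤ m + m * t'.encard := add_le_add (hfib' y) h2
        _ = m * (insert y t').encard := by
            rw [encard_insert_of_notMem hy, mul_add, mul_one, add_comm]
  · rw [ht.encard_eq]
    rw [ENat.mul_top]
    · exact le_top
    · exact_mod_cast hm

lemma intbox_encard {k : ℕ} (c : EuclideanSpace ℝ (Fin k)) (r : ℝ) :
    {b : EuclideanSpace ℝ (Fin k) | (∀ i, ∃ z : ℤ, b i = z) ∧ ∀ i, |b i - c i| ≤ r}.encard
      ≤ ((2 * ⌈r⌉₊ + 1) ^ k : ℕ) := by
  set S := {b : EuclideanSpace ℝ (Fin k) | (∀ i, ∃ z : ℤ, b i = z) ∧ ∀ i, |b i - c i| ≤ r}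
    with hS
  set t : Finset (Fin k → ℤ) := Fintype.piFinset fun i => Finset.Icc ⌊c i - r⌋ ⌊c i + r⌋ with ht
  set g : EuclideanSpace ℝ (Fin k) → (Fin k → ℤ) := fun b i => ⌊b i⌋ with hgdef
  have hg : ∀ b ∈ S, g b ∈ (t : Set (Fin k → ℤ)) := by
    intro b hb
    rw [Finset.mem_coe, ht, Fintype.mem_piFinset]
    intro i
    obtain ⟨z, hz⟩ := hb.1 i
    have habs := abs_le.1 (hb.2 i)
    rw [hgdef]
    simp only
    rw [Finset.mem_Icc, hz, Int.floor_intCast]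
    constructor
    · have h1 : ((⌊c i - r⌋ : ℤ) : ℝ) ≤ z := le_trans (Int.floor_le _) (by rw [← hz]; linarith [habs.1])
      exact_mod_cast h1
    · exact Int.le_floor.2 (by rw [← hz]; linarith [habs.2])
  have hinj : Set.InjOn g S := by
    intro b hb b' hb' heq
    ext i
    obtain ⟨z, hz⟩ := hb.1 i
    obtain ⟨z', hz'⟩ := hb'.1 i
    have : ⌊b i⌋ = ⌊b' i⌋ := congrFun heq i
    rw [hz, hz', Int.floor_intCast, Int.floor_intCast] at this
    rw [hz, hz', this]
  have hcard : t.card ≤ (2 * ⌈r⌉₊ + 1) ^ k := by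
    rw [ht, Fintype.card_piFinset]
    calc ∏ i, (Finset.Icc ⌊c i - r⌋ ⌊c i + r⌋).card
        ≤ ∏ _i : Fin k, (2 * ⌈r⌉₊ + 1) := by
          refine Finset.prod_le_prod' fun i _ => ?_
          rw [Int.card_Icc]
          rw [Int.toNat_le]
          rw [Int.lt_add_one_iff.symm]
          have hlt : ((⌊c i + r⌋ + 1 - ⌊c i - r⌋ : ℤ) : ℝ) < ((2 * ⌈r⌉₊ + 1 : ℕ) : ℝ) + 1 := by
            push_cast
            linarith [Int.floor_le (c i + r), Int.sub_one_lt_floor (c i - r), Nat.le_ceil r]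
          exact_mod_cast hlt
      _ = (2 * ⌈r⌉₊ + 1) ^ k := by
          rw [Finset.prod_const, Finset.card_univ, Fintype.card_fin]
  calc S.encard = (g '' S).encard := (hinj.encard_image).symm
    _ ≤ (t : Set (Fin k → ℤ)).encard := encard_le_encard (image_subset_iff.2 hg)
    _ = (t.card : ℕ∞) := encard_coe_eq_coe_finsetCard t
    _ ≤ ((2 * ⌈r⌉₊ + 1) ^ k : ℕ) := by exact_mod_cast hcard

lemma norm_le_of_coords {k : ℕ} (x : EuclideanSpace ℝ (Fin k)) (M : ℝ) (hM : 0 ≤ M)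
    (h : ∀ i, |x i| ≤ M) : ‖x‖ ≤ Real.sqrt k * M := by
  rw [EuclideanSpace.norm_eq]
  rw [show Real.sqrt k * M = Real.sqrt (k * M ^ 2) by
    rw [Real.sqrt_mul (Nat.cast_nonneg k), Real.sqrt_sq hM]]
  apply Real.sqrt_le_sqrt
  calc ∑ i, ‖x i‖ ^ 2 ≤ ∑ _i : Fin k, M ^ 2 := by
        refine Finset.sum_le_sum fun i _ => ?_
        rw [Real.norm_eq_abs]
        exact sq_le_sq' (by linarith [abs_nonneg (x i), h i]) (h i)
    _ = k * M ^ 2 := by rw [Finset.sum_const, Finset.card_univ, Fintype.card_fin, nsmul_eq_mul]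

lemma coord_le_norm {k : ℕ} (x : EuclideanSpace ℝ (Fin k)) (i : Fin k) : |x i| ≤ ‖x‖ := by
  rw [EuclideanSpace.norm_eq]
  rw [show |x i| = Real.sqrt (‖x i‖ ^ 2) by
    rw [Real.sqrt_sq_eq_abs, Real.norm_eq_abs, abs_abs]]
  apply Real.sqrt_le_sqrt
  exact Finset.single_le_sum (fun j _ => sq_nonneg (‖x j‖)) (Finset.mem_univ i)

lemma abs_sub_le_one_of_floor_eq {u v : ℝ} (h : ⌊u⌋ = ⌊v⌋) : |u - v| ≤ 1 := by
  have h1 := Int.floor_le u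
  have h2 := Int.lt_floor_add_one u
  have h3 := Int.floor_le v
  have h4 := Int.lt_floor_add_one v
  have hc : ((⌊u⌋ : ℤ) : ℝ) = ((⌊v⌋ : ℤ) : ℝ) := by exact_mod_cast congrArg (fun z : ℤ => (z : ℝ)) h
  rw [abs_le]
  constructor <;> linarith

/-- The inner supremum in the definition of the counting measure. -/
def csup (α : ℝ) (A : Set (EuclideanSpace ℝ ι)) (ℓ : ℝ) : ℝ≥0∞ :=
  ⨆ (a : EuclideanSpace ℝ ι) (s : ℝ) (_ : ℓ ≤ s ∧ 0 < s),
    ((floorSet A ∩ cube a s).encard : ℝ≥0∞) / ENNReal.ofReal (s ^ α)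

/-- The inner supremum in the definition of the mass measure. -/
def msup (α : ℝ) (A : Set (EuclideanSpace ℝ ι)) (L : ℝ) : ℝ≥0∞ :=
  ⨆ (ℓ : ℝ) (_ : L ≤ ℓ ∧ 0 < ℓ),
    ((floorSet A ∩ centeredCube ℓ).encard : ℝ≥0∞) / ENNReal.ofReal ((2 * ℓ) ^ α)

lemma countMeas_eq_iInf (α : ℝ) (A : Set (EuclideanSpace ℝ ι)) :
    countMeas α A = ⨅ ℓ : ℝ, csup α A ℓ := rfl

lemma massMeas_eq_iInf (α : ℝ) (A : Set (EuclideanSpace ℝ ι)) :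
    massMeas α A = ⨅ L : ℝ, msup α A L := rfl

lemma iInf_le_mul_iInf {f g : ℝ → ℝ≥0∞} (c : ℝ≥0∞) (hc0 : c ≠ 0) (hct : c ≠ ⊤)
    (h : ∀ ℓ, ∃ ℓ', f ℓ' ≤ c * g ℓ) : (⨅ ℓ, f ℓ) ≤ c * ⨅ ℓ, g ℓ := by
  rw [ENNReal.mul_iInf_of_ne hc0 hct]
  refine le_iInf fun ℓ => ?_
  obtain ⟨ℓ', h'⟩ := h ℓ
  exact le_trans (iInf_le _ ℓ') h'

lemma div_le_scale_div (X : ℝ≥0∞) (lam s α : ℝ) (hlam : 0 < lam) (hs : 0 < s) :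
    X / ENNReal.ofReal (s ^ α) =
      ENNReal.ofReal (lam ^ α) * (X / ENNReal.ofReal ((lam * s) ^ α)) := by
  have hsplit : ENNReal.ofReal ((lam * s) ^ α) =
      ENNReal.ofReal (lam ^ α) * ENNReal.ofReal (s ^ α) := by
    rw [Real.mul_rpow hlam.le hs.le, ENNReal.ofReal_mul (Real.rpow_nonneg hlam.le α)]
  have h0 : ENNReal.ofReal (lam ^ α) ≠ 0 :=
    (ENNReal.ofReal_pos.2 (Real.rpow_pos_of_pos hlam α)).ne'
  rw [hsplit, ← mul_div_assoc, ENNReal.mul_div_mul_left _ _ h0 ENNReal.ofReal_ne_top]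

set_option maxHeartbeats 2000000 in
lemma oneside (k d : ℕ) (α K : ℝ) (hα : 0 ≤ α) (hK : 1 ≤ K) :
    ∃ c : ℝ, 1 ≤ c ∧
      ∀ (A : Set (EuclideanSpace ℝ (Fin k)))
        (F : EuclideanSpace ℝ (Fin k) → EuclideanSpace ℝ (Fin d)),
        (∀ x ∈ A, ∀ y ∈ A, ‖F x - F y‖ ≤ K * ‖x - y‖) →
        (∀ x ∈ A, ∀ y ∈ A, ‖x - y‖ ≤ K * ‖F x - F y‖) →
        (∀ x ∈ A, ‖F x‖ ≤ K * ‖x‖) →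
        countMeas α A ≤ ENNReal.ofReal c * countMeas α (F '' A) ∧
          massMeas α A ≤ ENNReal.ofReal c * massMeas α (F '' A) := by
  set sk := Real.sqrt k with hsk
  set sd := Real.sqrt d with hsd
  have hsk0 : 0 ≤ sk := Real.sqrt_nonneg _
  have hsd0 : 0 ≤ sd := Real.sqrt_nonneg _
  have hK0 : 0 ≤ K := le_trans zero_le_one hK
  set r : ℝ := K * sd + 2 * sk with hr
  set m : ℕ := (2 * ⌈r⌉₊ + 1) ^ k with hm
  have hm1 : 1 ≤ m := Nat.one_le_iff_ne_zero.2 (pow_ne_zero _ (by omega))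
  set lam : ℝ := 4 * K * sk + 4 with hlam
  have hlam1 : 1 ≤ lam := by nlinarith
  have hlam0 : 0 < lam := lt_of_lt_of_le one_pos hlam1
  set c : ℝ := m * lam ^ α with hc
  have hlamα : 1 ≤ lam ^ α := Real.one_le_rpow hlam1 hα
  have hc1 : 1 ≤ c := by
    have : (1 : ℝ) ≤ m := by exact_mod_cast hm1
    nlinarith
  refine ⟨c, hc1, ?_⟩
  intro A F hlipF hlipB hnorm
  -- choice of preimages under the floor map
  have hch : ∀ b : EuclideanSpace ℝ (Fin k), b ∈ floorSet A →
      ∃ x, x ∈ A ∧ floorPt x = b := by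
    intro b hb
    exact (Set.mem_image _ _ _).1 hb
  choose! X hX1 hX2 using hch
  set f : EuclideanSpace ℝ (Fin k) → EuclideanSpace ℝ (Fin d) :=
    fun b => floorPt (F (X b)) with hf
  -- coordinates of b vs X b
  have hcoord : ∀ b ∈ floorSet A, ∀ i, b i ≤ X b i ∧ X b i < b i + 1 := by
    intro b hb i
    have h2 : b i = (⌊X b i⌋ : ℝ) := by
      conv_lhs => rw [← hX2 b hb]
      rfl
    rw [h2]
    exact ⟨Int.floor_le _, Int.lt_floor_add_one _⟩
  -- the fiber bound
  have hfiber : ∀ S : Set (EuclideanSpace ℝ (Fin k)), S ⊆ floorSet A →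
      ∀ y, {b ∈ S | f b = y}.encard ≤ m := by
    intro S hSsub y
    rcases {b ∈ S | f b = y}.eq_empty_or_nonempty with he | ⟨b1, hb1⟩
    · simp [he]
    refine le_trans (encard_le_encard ?_) (intbox_encard b1 r)
    intro b hb
    have hbA : b ∈ floorSet A := hSsub hb.1
    have hb1A : b1 ∈ floorSet A := hSsub hb1.1
    refine ⟨fun i => ⟨⌊X b i⌋, by (conv_lhs => rw [← hX2 b hbA]); rfl⟩, fun i => ?_⟩
    have hXbA := hX1 b hbA
    have hXb1A := hX1 b1 hb1A
    have hfb : floorPt (F (X b)) = floorPt (F (X b1)) := hb.2.trans hb1.2.symm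
    have hFd : ∀ j, |F (X b) j - F (X b1) j| ≤ 1 := by
      intro j
      refine abs_sub_le_one_of_floor_eq ?_
      have h := congrFun (congrArg WithLp.ofLp hfb) j
      have h' : ((⌊F (X b) j⌋ : ℤ) : ℝ) = ((⌊F (X b1) j⌋ : ℤ) : ℝ) := h
      exact_mod_cast h'
    have hFnorm : ‖F (X b) - F (X b1)‖ ≤ sd * 1 :=
      norm_le_of_coords _ 1 zero_le_one (fun j => hFd j)
    have hXX : ‖X b - X b1‖ ≤ K * (sd * 1) :=
      le_trans (hlipB _ hXbA _ hXb1A) (mul_le_mul_of_nonneg_left hFnorm hK0)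
    have hbXb : ∀ bb, bb ∈ floorSet A → ‖bb - X bb‖ ≤ sk * 1 := by
      intro bb hbb
      refine norm_le_of_coords _ 1 zero_le_one (fun j => ?_)
      have h := hcoord bb hbb j
      have : (bb - X bb) j = bb j - X bb j := rfl
      rw [this, abs_le]
      constructor <;> linarith [h.1, h.2]
    have hnn : ‖(b : EuclideanSpace ℝ (Fin k)) - b1‖ ≤ r := by
      have e : (b : EuclideanSpace ℝ (Fin k)) - b1 =
          (b - X b) + (X b - X b1) + (X b1 - b1) := by abel
      rw [e]
      have t1 := hbXb b hbA
      have t2 := hbXb b1 hb1A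
      have t3 : ‖X b1 - b1‖ = ‖b1 - X b1‖ := norm_sub_rev _ _
      calc ‖(b - X b) + (X b - X b1) + (X b1 - b1)‖
          ≤ ‖b - X b‖ + ‖X b - X b1‖ + ‖X b1 - b1‖ := norm_add₃_le
        _ ≤ r := by rw [t3]; rw [hr]; linarith
    have : (b - b1 : EuclideanSpace ℝ (Fin k)) i = b i - b1 i := rfl
    exact le_trans (by rw [← this]; exact coord_le_norm _ i) hnn
  -- the image is in the floor set of F '' A
  have hfmem : ∀ b ∈ floorSet A, f b ∈ floorSet (F '' A) := by
    intro b hb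
    exact Set.mem_image_of_mem floorPt (Set.mem_image_of_mem F (hX1 b hb))
  -- counting cube estimate
  have hcube : ∀ (a : EuclideanSpace ℝ (Fin k)) (s : ℝ), 1 ≤ s →
      ∃ a' : EuclideanSpace ℝ (Fin d),
        (floorSet A ∩ cube a s).encard ≤
          (m : ℕ∞) * (floorSet (F '' A) ∩ cube a' (lam * s)).encard := by
    intro a s hs
    rcases (floorSet A ∩ cube a s).eq_empty_or_nonempty with he | ⟨b0, hb0⟩
    · exact ⟨0, by simp [he]⟩
    set a' : EuclideanSpace ℝ (Fin d) :=
      WithLp.toLp 2 (fun i => F (X b0) i - (K * sk * (s + 1) + 1)) with ha'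
    refine ⟨a', encard_le_mul_of_fibers _ _ f m ?_
      (fun y => hfiber _ inter_subset_left y)⟩
    intro b hb
    have hbA : b ∈ floorSet A := hb.1
    have hb0A : b0 ∈ floorSet A := hb0.1
    refine ⟨hfmem b hbA, ?_⟩
    have hcb : ∀ i, a i ≤ b i ∧ b i < a i + s := hb.2
    have hcb0 : ∀ i, a i ≤ b0 i ∧ b0 i < a i + s := hb0.2
    have hXd : ‖X b - X b0‖ ≤ sk * (s + 1) := by
      refine norm_le_of_coords _ (s + 1) (by linarith) (fun j => ?_)
      have h1 := hcoord b hbA j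
      have h2 := hcoord b0 hb0A j
      have e : (X b - X b0) j = X b j - X b0 j := rfl
      rw [e, abs_le]
      constructor <;> linarith [(hcb j).1, (hcb j).2, (hcb0 j).1, (hcb0 j).2]
    have hFd : ‖F (X b) - F (X b0)‖ ≤ K * (sk * (s + 1)) :=
      le_trans (hlipF _ (hX1 b hbA) _ (hX1 b0 hb0A))
        (mul_le_mul_of_nonneg_left hXd hK0)
    intro i
    have habs : |F (X b) i - F (X b0) i| ≤ K * (sk * (s + 1)) := by
      have e : (F (X b) - F (X b0)) i = F (X b) i - F (X b0) i := rfl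
      rw [← e]
      exact le_trans (coord_le_norm _ i) hFd
    have habs' := abs_le.1 habs
    have hfl1 : F (X b) i - 1 < (⌊F (X b) i⌋ : ℝ) := Int.sub_one_lt_floor _
    have hfl2 : ((⌊F (X b) i⌋ : ℤ) : ℝ) ≤ F (X b) i := Int.floor_le _
    have ef : f b i = ((⌊F (X b) i⌋ : ℤ) : ℝ) := rfl
    have ea : a' i = F (X b0) i - (K * sk * (s + 1) + 1) := rfl
    have hKsk : 0 ≤ K * sk := mul_nonneg hK0 hsk0
    rw [ef, ea]
    constructor
    · nlinarith [habs'.1, habs'.2]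
    · rw [hlam]
      nlinarith [habs'.1, habs'.2, mul_nonneg hKsk (sub_nonneg.2 hs)]
  -- centered cube estimate
  have hcc : ∀ ℓ : ℝ, 1 ≤ ℓ →
      (floorSet A ∩ centeredCube ℓ).encard ≤
        (m : ℕ∞) * (floorSet (F '' A) ∩ centeredCube (lam * ℓ)).encard := by
    intro ℓ hℓ
    refine encard_le_mul_of_fibers _ _ f m ?_ (fun y => hfiber _ inter_subset_left y)
    intro b hb
    have hbA : b ∈ floorSet A := hb.1
    refine ⟨hfmem b hbA, ?_⟩
    have hcb : ∀ i, -ℓ ≤ b i ∧ b i < -ℓ + 2 * ℓ := hb.2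
    have hXn : ‖X b‖ ≤ sk * (ℓ + 1) := by
      refine norm_le_of_coords _ (ℓ + 1) (by linarith) (fun j => ?_)
      have h1 := hcoord b hbA j
      rw [abs_le]
      constructor <;> linarith [(hcb j).1, (hcb j).2, h1.1, h1.2]
    have hFn : ‖F (X b)‖ ≤ K * (sk * (ℓ + 1)) :=
      le_trans (hnorm _ (hX1 b hbA)) (mul_le_mul_of_nonneg_left hXn hK0)
    intro i
    have habs' := abs_le.1 (le_trans (coord_le_norm (F (X b)) i) hFn)
    have hfl1 : F (X b) i - 1 < (⌊F (X b) i⌋ : ℝ) := Int.sub_one_lt_floor _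
    have hfl2 : ((⌊F (X b) i⌋ : ℤ) : ℝ) ≤ F (X b) i := Int.floor_le _
    have ef : f b i = ((⌊F (X b) i⌋ : ℤ) : ℝ) := rfl
    have hKsk : 0 ≤ K * sk := mul_nonneg hK0 hsk0
    constructor
    · show -(lam * ℓ) ≤ f b i
      rw [ef, hlam]
      nlinarith [habs'.1, habs'.2, mul_nonneg hKsk (sub_nonneg.2 hℓ)]
    · show f b i < -(lam * ℓ) + 2 * (lam * ℓ)
      rw [ef, hlam]
      nlinarith [habs'.1, habs'.2, mul_nonneg hKsk (sub_nonneg.2 hℓ)]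
  have hc0 : ENNReal.ofReal c ≠ 0 := (ENNReal.ofReal_pos.2 (lt_of_lt_of_le one_pos hc1)).ne'
  have hcsplit : ENNReal.ofReal c = (m : ℝ≥0∞) * ENNReal.ofReal (lam ^ α) := by
    rw [hc, ENNReal.ofReal_mul (Nat.cast_nonneg m), ENNReal.ofReal_natCast]
  constructor
  · -- counting measure
    rw [countMeas_eq_iInf, countMeas_eq_iInf]
    refine iInf_le_mul_iInf _ hc0 ENNReal.ofReal_ne_top (fun ℓ => ⟨max ℓ 1, ?_⟩)
    simp only [csup]
    refine iSup_le fun a => iSup_le fun s => iSup_le fun hs => ?_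
    obtain ⟨hs1, hs2⟩ := hs
    have hs1' : (1 : ℝ) ≤ s := le_trans (le_max_right ℓ 1) hs1
    obtain ⟨a', hcard⟩ := hcube a s hs1'
    have hsl : ℓ ≤ lam * s := le_trans (le_trans (le_max_left ℓ 1) hs1) (by nlinarith)
    have hsl0 : 0 < lam * s := mul_pos hlam0 hs2
    have hlast : ((floorSet (F '' A) ∩ cube a' (lam * s)).encard : ℝ≥0∞) /
        ENNReal.ofReal ((lam * s) ^ α) ≤
        ⨆ (a : EuclideanSpace ℝ (Fin d)) (s' : ℝ) (_ : ℓ ≤ s' ∧ 0 < s'),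
          ((floorSet (F '' A) ∩ cube a s').encard : ℝ≥0∞) / ENNReal.ofReal (s' ^ α) :=
      le_iSup_of_le a' (le_iSup_of_le (lam * s) (le_iSup_of_le ⟨hsl, hsl0⟩ le_rfl))
    calc ((floorSet A ∩ cube a s).encard : ℝ≥0∞) / ENNReal.ofReal (s ^ α)
        ≤ (((m : ℕ∞) * (floorSet (F '' A) ∩ cube a' (lam * s)).encard : ℕ∞) : ℝ≥0∞) /
            ENNReal.ofReal (s ^ α) :=
          ENNReal.div_le_div_right (ENat.toENNReal_le.2 hcard) _
      _ = (m : ℝ≥0∞) * (((floorSet (F '' A) ∩ cube a' (lam * s)).encard : ℝ≥0∞) /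
            ENNReal.ofReal (s ^ α)) := by
          rw [ENat.toENNReal_mul, mul_div_assoc, ENat.toENNReal_coe]
      _ = (m : ℝ≥0∞) * (ENNReal.ofReal (lam ^ α) *
            (((floorSet (F '' A) ∩ cube a' (lam * s)).encard : ℝ≥0∞) /
              ENNReal.ofReal ((lam * s) ^ α))) := by
          rw [div_le_scale_div _ lam s α hlam0 hs2]
      _ ≤ (m : ℝ≥0∞) * (ENNReal.ofReal (lam ^ α) *
            ⨆ (a : EuclideanSpace ℝ (Fin d)) (s' : ℝ) (_ : ℓ ≤ s' ∧ 0 < s'),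
              ((floorSet (F '' A) ∩ cube a s').encard : ℝ≥0∞) / ENNReal.ofReal (s' ^ α)) :=
          mul_le_mul_right (mul_le_mul_right hlast _) _
      _ = ENNReal.ofReal c * csup α (F '' A) ℓ := by
          rw [hcsplit, mul_assoc]; rfl
  · -- mass measure
    rw [massMeas_eq_iInf, massMeas_eq_iInf]
    refine iInf_le_mul_iInf _ hc0 ENNReal.ofReal_ne_top (fun L => ⟨max L 1, ?_⟩)
    simp only [msup]
    refine iSup_le fun ℓ => iSup_le fun hs => ?_
    obtain ⟨hs1, hs2⟩ := hs
    have hs1' : (1 : ℝ) ≤ ℓ := le_trans (le_max_right L 1) hs1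
    have hcard := hcc ℓ hs1'
    have hsl : L ≤ lam * ℓ := le_trans (le_trans (le_max_left L 1) hs1) (by nlinarith)
    have hsl0 : 0 < lam * ℓ := mul_pos hlam0 (lt_of_lt_of_le one_pos hs1')
    have e2 : lam * (2 * ℓ) = 2 * (lam * ℓ) := by ring
    have hlast : ((floorSet (F '' A) ∩ centeredCube (lam * ℓ)).encard : ℝ≥0∞) /
        ENNReal.ofReal ((2 * (lam * ℓ)) ^ α) ≤
        ⨆ (ℓ' : ℝ) (_ : L ≤ ℓ' ∧ 0 < ℓ'),
          ((floorSet (F '' A) ∩ centeredCube ℓ').encard : ℝ≥0∞) /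
            ENNReal.ofReal ((2 * ℓ') ^ α) :=
      le_iSup_of_le (lam * ℓ) (le_iSup_of_le ⟨hsl, hsl0⟩ le_rfl)
    calc ((floorSet A ∩ centeredCube ℓ).encard : ℝ≥0∞) / ENNReal.ofReal ((2 * ℓ) ^ α)
        ≤ (((m : ℕ∞) * (floorSet (F '' A) ∩ centeredCube (lam * ℓ)).encard : ℕ∞) : ℝ≥0∞) /
            ENNReal.ofReal ((2 * ℓ) ^ α) :=
          ENNReal.div_le_div_right (ENat.toENNReal_le.2 hcard) _
      _ = (m : ℝ≥0∞) * (((floorSet (F '' A) ∩ centeredCube (lam * ℓ)).encard : ℝ≥0∞) /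
            ENNReal.ofReal ((2 * ℓ) ^ α)) := by
          rw [ENat.toENNReal_mul, mul_div_assoc, ENat.toENNReal_coe]
      _ = (m : ℝ≥0∞) * (ENNReal.ofReal (lam ^ α) *
            (((floorSet (F '' A) ∩ centeredCube (lam * ℓ)).encard : ℝ≥0∞) /
              ENNReal.ofReal ((2 * (lam * ℓ)) ^ α))) := by
          rw [div_le_scale_div _ lam (2 * ℓ) α hlam0 (by linarith), e2]
      _ ≤ (m : ℝ≥0∞) * (ENNReal.ofReal (lam ^ α) *
            ⨆ (ℓ' : ℝ) (_ : L ≤ ℓ' ∧ 0 < ℓ'),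
              ((floorSet (F '' A) ∩ centeredCube ℓ').encard : ℝ≥0∞) /
                ENNReal.ofReal ((2 * ℓ') ^ α)) :=
          mul_le_mul_right (mul_le_mul_right hlast _) _
      _ = ENNReal.ofReal c * msup α (F '' A) L := by
          rw [hcsplit, mul_assoc]; rfl

lemma twoside (k d : ℕ) (K : ℝ)
    (R : Submodule ℝ (EuclideanSpace ℝ (Fin k)))
    (T : R →ₗ[ℝ] EuclideanSpace ℝ (Fin d))
    (hinj : Function.Injective T)
    (hK : ∀ x : R, ‖T x‖ ≤ K * ‖x‖ ∧ ‖x‖ ≤ K * ‖T x‖)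
    (α : ℝ) (hα : 0 ≤ α) :
    ∃ c : ℝ, 1 ≤ c ∧ ∀ A : Set R,
      countMeas α (Subtype.val '' A) ≤ ENNReal.ofReal c * countMeas α ((fun x : R => T x) '' A) ∧
      countMeas α ((fun x : R => T x) '' A) ≤ ENNReal.ofReal c * countMeas α (Subtype.val '' A) ∧
      massMeas α (Subtype.val '' A) ≤ ENNReal.ofReal c * massMeas α ((fun x : R => T x) '' A) ∧
      massMeas α ((fun x : R => T x) '' A) ≤ ENNReal.ofReal c * massMeas α (Subtype.val '' A) := by
  classical
  set K' := max K 1 with hK'def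
  have hK'1 : 1 ≤ K' := le_max_right _ _
  have hKK' : K ≤ K' := le_max_left _ _
  have hK' : ∀ x : R, ‖T x‖ ≤ K' * ‖x‖ ∧ ‖x‖ ≤ K' * ‖T x‖ := by
    intro x
    exact ⟨le_trans (hK x).1 (mul_le_mul_of_nonneg_right hKK' (norm_nonneg _)),
      le_trans (hK x).2 (mul_le_mul_of_nonneg_right hKK' (norm_nonneg _))⟩
  obtain ⟨c1, hc11, hc1⟩ := oneside k d α K' hα hK'1
  obtain ⟨c2, hc21, hc2⟩ := oneside d k α K' hα hK'1
  set F : EuclideanSpace ℝ (Fin k) → EuclideanSpace ℝ (Fin d) :=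
    fun x => if h : x ∈ R then T ⟨x, h⟩ else 0 with hFdef
  set G : EuclideanSpace ℝ (Fin d) → EuclideanSpace ℝ (Fin k) :=
    fun y => if h : ∃ a : R, T a = y then ((h.choose : R) : EuclideanSpace ℝ (Fin k)) else 0
    with hGdef
  have hFval : ∀ a : R, F (a : EuclideanSpace ℝ (Fin k)) = T a := by
    intro a
    rw [hFdef]
    simp only
    rw [dif_pos a.2, Subtype.coe_eta]
  have hGval : ∀ a : R, G (T a) = (a : EuclideanSpace ℝ (Fin k)) := by
    intro a
    have h : ∃ b : R, T b = T a := ⟨a, rfl⟩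
    rw [hGdef]
    simp only
    rw [dif_pos h]
    have hba : h.choose = a := hinj h.choose_spec
    rw [hba]
  refine ⟨max c1 c2, le_trans hc11 (le_max_left _ _), fun A => ?_⟩
  have hFA : F '' (Subtype.val '' A) = (fun x : R => T x) '' A := by
    rw [Set.image_image]
    exact Set.image_congr fun a _ => hFval a
  have hGA : G '' ((fun x : R => T x) '' A) = Subtype.val '' A := by
    rw [Set.image_image]
    exact Set.image_congr fun a _ => hGval a
  have hnormsub : ∀ a b : R, ‖(a : EuclideanSpace ℝ (Fin k)) - b‖ = ‖a - b‖ := fun a b => rfl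
  have h1 : countMeas α (Subtype.val '' A) ≤
        ENNReal.ofReal c1 * countMeas α ((fun x : R => T x) '' A) ∧
      massMeas α (Subtype.val '' A) ≤
        ENNReal.ofReal c1 * massMeas α ((fun x : R => T x) '' A) := by
    rw [← hFA]
    refine hc1 (Subtype.val '' A) F ?_ ?_ ?_
    · rintro _ ⟨a, _, rfl⟩ _ ⟨b, _, rfl⟩
      rw [hFval a, hFval b, ← map_sub, hnormsub a b]
      exact (hK' _).1
    · rintro _ ⟨a, _, rfl⟩ _ ⟨b, _, rfl⟩
      rw [hFval a, hFval b, ← map_sub, hnormsub a b]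
      exact (hK' _).2
    · rintro _ ⟨a, _, rfl⟩
      rw [hFval a]
      exact (hK' a).1
  have h2 : countMeas α ((fun x : R => T x) '' A) ≤
        ENNReal.ofReal c2 * countMeas α (Subtype.val '' A) ∧
      massMeas α ((fun x : R => T x) '' A) ≤
        ENNReal.ofReal c2 * massMeas α (Subtype.val '' A) := by
    rw [← hGA]
    refine hc2 ((fun x : R => T x) '' A) G ?_ ?_ ?_
    · rintro _ ⟨a, _, rfl⟩ _ ⟨b, _, rfl⟩
      rw [hGval a, hGval b, hnormsub a b, ← map_sub]
      exact (hK' _).2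
    · rintro _ ⟨a, _, rfl⟩ _ ⟨b, _, rfl⟩
      rw [hGval a, hGval b, hnormsub a b, ← map_sub]
      exact (hK' _).1
    · rintro _ ⟨a, _, rfl⟩
      rw [hGval a]
      exact (hK' a).2
  have hm1 : ENNReal.ofReal c1 ≤ ENNReal.ofReal (max c1 c2) :=
    ENNReal.ofReal_le_ofReal (le_max_left _ _)
  have hm2 : ENNReal.ofReal c2 ≤ ENNReal.ofReal (max c1 c2) :=
    ENNReal.ofReal_le_ofReal (le_max_right _ _)
  exact ⟨h1.1.trans (mul_le_mul_left hm1 _), h2.1.trans (mul_le_mul_left hm2 _),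
    h1.2.trans (mul_le_mul_left hm1 _), h2.2.trans (mul_le_mul_left hm2 _)⟩

lemma reg_aux {X Y : ℝ≥0∞} {c c' : ℝ} (h1 : X ≤ ENNReal.ofReal c * Y)
    (h2 : Y ≤ ENNReal.ofReal c' * X) (h : 0 < X ∧ X < ⊤) : 0 < Y ∧ Y < ⊤ := by
  obtain ⟨hp, ht⟩ := h
  constructor
  · by_contra hy
    have hy0 : Y = 0 := by simpa using hy
    rw [hy0, mul_zero] at h1
    exact absurd (le_antisymm h1 zero_le) hp.ne'
  · exact lt_of_le_of_lt h2 (ENNReal.mul_lt_top ENNReal.ofReal_lt_top ht)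

/-- Invariance of the counting and mass measures (up to a constant depending only on
`α, k, d, K`), of regularity, and of the counting and mass dimensions under an injective
linear transformation `T : R → ℝ^d` defined on a linear subspace `R ⊆ ℝ^k`, where `K` bounds
the operator norms of `T` and of its inverse `T⁻¹ : T(R) → R`. -/
theorem stmt_9 (k d : ℕ) (α K : ℝ) (hα : 0 ≤ α)
    (R : Submodule ℝ (EuclideanSpace ℝ (Fin k)))
    (T : R →ₗ[ℝ] EuclideanSpace ℝ (Fin d))
    (hinj : Function.Injective T)
    (hK : ∀ x : R, ‖T x‖ ≤ K * ‖x‖ ∧ ‖x‖ ≤ K * ‖T x‖) :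
    ∃ c : ℝ, 1 ≤ c ∧ ∀ A : Set R,
      countMeas α (Subtype.val '' A) ≤ ENNReal.ofReal c * countMeas α ((fun x : R => T x) '' A) ∧
      countMeas α ((fun x : R => T x) '' A) ≤ ENNReal.ofReal c * countMeas α (Subtype.val '' A) ∧
      ((0 < countMeas α (Subtype.val '' A) ∧ countMeas α (Subtype.val '' A) < ⊤) ↔
        (0 < countMeas α ((fun x : R => T x) '' A) ∧
          countMeas α ((fun x : R => T x) '' A) < ⊤)) ∧
      cdim (Subtype.val '' A) = cdim ((fun x : R => T x) '' A) ∧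
      massMeas α (Subtype.val '' A) ≤ ENNReal.ofReal c * massMeas α ((fun x : R => T x) '' A) ∧
      massMeas α ((fun x : R => T x) '' A) ≤ ENNReal.ofReal c * massMeas α (Subtype.val '' A) ∧
      ((0 < massMeas α (Subtype.val '' A) ∧ massMeas α (Subtype.val '' A) < ⊤) ↔
        (0 < massMeas α ((fun x : R => T x) '' A) ∧
          massMeas α ((fun x : R => T x) '' A) < ⊤)) ∧
      mdim (Subtype.val '' A) = mdim ((fun x : R => T x) '' A) := by
  obtain ⟨c, hc1, hc⟩ := twoside k d K R T hinj hK α hα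
  refine ⟨c, hc1, fun A => ?_⟩
  obtain ⟨e1, e2, e3, e4⟩ := hc A
  have hcount_set : {β : ℝ | 0 ≤ β ∧ countMeas β (Subtype.val '' A) = 0} =
      {β : ℝ | 0 ≤ β ∧ countMeas β ((fun x : R => T x) '' A) = 0} := by
    ext β
    simp only [Set.mem_setOf_eq]
    constructor
    · rintro ⟨hβ, h0⟩
      obtain ⟨c', _, hc'⟩ := twoside k d K R T hinj hK β hβ
      have h := (hc' A).2.1
      rw [h0, mul_zero] at h
      exact ⟨hβ, le_antisymm h zero_le⟩
    · rintro ⟨hβ, h0⟩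
      obtain ⟨c', _, hc'⟩ := twoside k d K R T hinj hK β hβ
      have h := (hc' A).1
      rw [h0, mul_zero] at h
      exact ⟨hβ, le_antisymm h zero_le⟩
  have hmass_set : {β : ℝ | 0 ≤ β ∧ massMeas β (Subtype.val '' A) = 0} =
      {β : ℝ | 0 ≤ β ∧ massMeas β ((fun x : R => T x) '' A) = 0} := by
    ext β
    simp only [Set.mem_setOf_eq]
    constructor
    · rintro ⟨hβ, h0⟩
      obtain ⟨c', _, hc'⟩ := twoside k d K R T hinj hK β hβ
      have h := (hc' A).2.2.2
      rw [h0, mul_zero] at h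
      exact ⟨hβ, le_antisymm h zero_le⟩
    · rintro ⟨hβ, h0⟩
      obtain ⟨c', _, hc'⟩ := twoside k d K R T hinj hK β hβ
      have h := (hc' A).2.2.1
      rw [h0, mul_zero] at h
      exact ⟨hβ, le_antisymm h zero_le⟩
  refine ⟨e1, e2, ⟨reg_aux e1 e2, reg_aux e2 e1⟩, ?_, e3, e4,
    ⟨reg_aux e3 e4, reg_aux e4 e3⟩, ?_⟩
  · simp only [cdim]
    rw [hcount_set]
  · simp only [mdim]
    rw [hmass_set]

end
end

section
/- For all non-empty sets A_i ⊆ ℝ^{d_i}, 1 ≤ i ≤ m, the counting dimension of the product satisfies max_{1≤i≤m} cdim(A_i) ≤ cdim(A_1 × ⋯ × A_m) ≤ Σ_{i=1}^m cdim(A_i), where the product set is viewed as a subset of ℝ^{d_1+⋯+d_m}. The same inequalities hold for the mass dimension mdim. -/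
open Set MeasureTheory Filter
open scoped ENNReal NNReal

noncomputable section

variable {ι : Type*} [Fintype ι]

/-- The product set `A_1 × ⋯ × A_m` viewed inside `ℝ^{d_1 + ⋯ + d_m}`, realized via the
sigma-type index `(i : Fin m) × Fin (dv i)`. -/
def prodSet (m : ℕ) (dv : Fin m → ℕ) (A : ∀ i, Set (EuclideanSpace ℝ (Fin (dv i)))) :
    Set (EuclideanSpace ℝ ((i : Fin m) × Fin (dv i))) :=
  {x | ∀ i : Fin m, ((WithLp.toLp 2 (fun j => x ⟨i, j⟩) : EuclideanSpace ℝ (Fin (dv i))) ∈ A i)}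

/-! ### Auxiliary cardinality lemmas -/

set_option linter.unusedSectionVars false

lemma encard_pi {κ : Type*} [Fintype κ] {β : κ → Type*} (t : ∀ i, Set (β i))
    (hfin : ∀ i, (t i).Finite) :
    (Set.univ.pi t).encard = ∏ i, (t i).encard := by
  classical
  have h1 : Set.univ.pi t = ↑(Fintype.piFinset fun i => (hfin i).toFinset) := by
    rw [Fintype.coe_piFinset]; simp
  rw [h1, Set.encard_coe_eq_coe_finsetCard, Fintype.card_piFinset]
  push_cast
  exact Finset.prod_congr rfl fun i _ => ((hfin i).encard_eq_coe_toFinset_card).symm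

lemma encard_le_pi {κ : Type*} [Fintype κ] {β : κ → Type*} {t : ∀ i, Set (β i)}
    (ht : ∀ i, (t i).Nonempty) (i : κ) : (t i).encard ≤ (Set.univ.pi t).encard := by
  classical
  choose w hw using ht
  have hinj : Set.InjOn (fun x => Function.update w i x) (t i) := by
    intro x _ y _ h
    have := congrFun h i
    simpa using this
  rw [← hinj.encard_image]
  refine Set.encard_le_encard ?_
  rintro z ⟨x, hx, rfl⟩
  intro j _
  rcases eq_or_ne j i with rfl | hne
  · simpa using hx
  · simpa [Function.update_of_ne hne] using hw j

lemma encard_le_pi' {κ : Type*} [Fintype κ] {β : κ → Type*} {t : ∀ i, Set (β i)}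
    (i : κ) (ht : ∀ j, j ≠ i → (t j).Nonempty) :
    (t i).encard ≤ (Set.univ.pi t).encard := by
  rcases (t i).eq_empty_or_nonempty with h | h
  · simp [h]
  · refine encard_le_pi (fun j => ?_) i
    rcases eq_or_ne j i with rfl | hne
    · exact h
    · exact ht j hne

lemma ennreal_zero_of_forall {x : ℝ≥0∞} (h : ∀ e : ℝ, 0 < e → x ≤ ENNReal.ofReal e) :
    x = 0 := by
  refine le_antisymm (ENNReal.le_of_forall_pos_le_add fun ε hε _ => ?_) zero_le
  rw [zero_add]
  simpa [ENNReal.ofReal_coe_nnreal] using h ε (by exact_mod_cast hε)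

lemma floorSet_int_coord {A : Set (EuclideanSpace ℝ ι)} {x : EuclideanSpace ℝ ι}
    (hx : x ∈ floorSet A) (i : ι) : ((⌊x i⌋ : ℤ) : ℝ) = x i := by
  obtain ⟨y, _, rfl⟩ := hx
  simp [floorPt]

lemma encard_cube_le (A : Set (EuclideanSpace ℝ ι)) (a : EuclideanSpace ℝ ι) {s : ℝ}
    (hs : 0 < s) :
    (floorSet A ∩ cube a s).encard ≤ (⌈s⌉.toNat : ℕ∞) ^ Fintype.card ι := by
  classical
  set f : EuclideanSpace ℝ ι → (ι → ℤ) := fun x i => ⌊x i⌋ with hf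
  have hinj : Set.InjOn f (floorSet A ∩ cube a s) := by
    intro x hx y hy h
    ext i
    rw [← floorSet_int_coord hx.1 i, ← floorSet_int_coord hy.1 i]
    exact_mod_cast congrFun h i
  have hsub : f '' (floorSet A ∩ cube a s) ⊆
      Set.univ.pi (fun i => Set.Ico (⌈a i⌉) (⌈a i⌉ + ⌈s⌉)) := by
    rintro _ ⟨x, hx, rfl⟩ i -
    obtain ⟨h1, h2⟩ := hx.2 i
    have hint := floorSet_int_coord hx.1 i
    constructor
    · rw [Int.ceil_le, hint]; exact h1
    · have h3 : ((⌊x i⌋ : ℤ) : ℝ) < (⌈a i⌉ : ℝ) + (⌈s⌉ : ℝ) := by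
        rw [hint]
        exact h2.trans_le (add_le_add (Int.le_ceil _) (Int.le_ceil _))
      exact_mod_cast h3
  calc (floorSet A ∩ cube a s).encard = (f '' (floorSet A ∩ cube a s)).encard :=
        (hinj.encard_image).symm
    _ ≤ (Set.univ.pi (fun i => Set.Ico (⌈a i⌉) (⌈a i⌉ + ⌈s⌉))).encard :=
        Set.encard_le_encard hsub
    _ = ∏ i, (Set.Ico (⌈a i⌉) (⌈a i⌉ + ⌈s⌉)).encard :=
        encard_pi _ (fun i => Set.finite_Ico _ _)
    _ = ∏ _i : ι, (⌈s⌉.toNat : ℕ∞) := by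
        refine Finset.prod_congr rfl fun i _ => ?_
        rw [← Finset.coe_Ico, Set.encard_coe_eq_coe_finsetCard, Int.card_Ico]
        norm_num
    _ = (⌈s⌉.toNat : ℕ∞) ^ Fintype.card ι := by rw [Finset.prod_const, Finset.card_univ]

/-! ### Basic estimates on the measures -/

lemma term_le_general (A : Set (EuclideanSpace ℝ ι)) (a : EuclideanSpace ℝ ι) {s : ℝ}
    (hs : 1 ≤ s) (α : ℝ) :
    ((floorSet A ∩ cube a s).encard : ℝ≥0∞) / ENNReal.ofReal (s ^ α)
      ≤ ENNReal.ofReal (2 ^ Fintype.card ι * s ^ ((Fintype.card ι : ℝ) - α)) := by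
  have hs0 : (0:ℝ) < s := lt_of_lt_of_le one_pos hs
  set d := Fintype.card ι
  have hceil : ((⌈s⌉.toNat : ℝ)) ≤ 2 * s := by
    have h0 : (0:ℤ) ≤ ⌈s⌉ := Int.ceil_nonneg hs0.le
    have h1 : ((⌈s⌉.toNat : ℤ) : ℝ) = ((⌈s⌉ : ℤ) : ℝ) := by rw [Int.toNat_of_nonneg h0]
    push_cast at h1
    rw [h1]
    have := Int.ceil_lt_add_one s
    linarith
  have h1 : ((floorSet A ∩ cube a s).encard : ℝ≥0∞) ≤ ENNReal.ofReal ((2*s) ^ d) := by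
    have hb := encard_cube_le A a hs0
    have h2 : ((⌈s⌉.toNat : ℕ∞)) ^ d = ((⌈s⌉.toNat ^ d : ℕ) : ℕ∞) := by push_cast; ring
    calc ((floorSet A ∩ cube a s).encard : ℝ≥0∞)
        ≤ ((((⌈s⌉.toNat : ℕ∞)) ^ d : ℕ∞) : ℝ≥0∞) := ENat.toENNReal_mono hb
      _ = ((⌈s⌉.toNat ^ d : ℕ) : ℝ≥0∞) := by rw [h2, ENat.toENNReal_coe]
      _ = ENNReal.ofReal ((⌈s⌉.toNat ^ d : ℕ) : ℝ) := (ENNReal.ofReal_natCast _).symm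
      _ ≤ ENNReal.ofReal ((2*s) ^ d) := by
          apply ENNReal.ofReal_le_ofReal
          push_cast
          exact pow_le_pow_left₀ (by positivity) hceil d
  have hdiv : ENNReal.ofReal ((2*s) ^ d) / ENNReal.ofReal (s ^ α)
      = ENNReal.ofReal (2 ^ d * s ^ ((d : ℝ) - α)) := by
    rw [← ENNReal.ofReal_div_of_pos (Real.rpow_pos_of_pos hs0 α)]
    congr 1
    rw [mul_pow, ← Real.rpow_natCast s d, mul_div_assoc, ← Real.rpow_sub hs0]
  calc ((floorSet A ∩ cube a s).encard : ℝ≥0∞) / ENNReal.ofReal (s ^ α)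
      ≤ ENNReal.ofReal ((2*s) ^ d) / ENNReal.ofReal (s ^ α) := ENNReal.div_le_div h1 le_rfl
    _ = _ := hdiv

lemma countMeas_zero_of_card_lt {α : ℝ} (hα : (Fintype.card ι : ℝ) < α)
    (A : Set (EuclideanSpace ℝ ι)) : countMeas α A = 0 := by
  apply ennreal_zero_of_forall
  intro e he
  set d := Fintype.card ι
  have hneg : (0:ℝ) < α - d := by linarith
  have htend : Tendsto (fun s : ℝ => 2 ^ d * s ^ ((d : ℝ) - α)) atTop (nhds 0) := by
    have h := (tendsto_rpow_neg_atTop hneg).const_mul ((2:ℝ) ^ d)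
    simpa [neg_sub, mul_zero] using h
  obtain ⟨ℓ₀, hℓ₀⟩ := (htend.eventually_lt_const he).exists_forall_of_atTop
  have key : ∀ (a : EuclideanSpace ℝ ι) (s : ℝ), max 1 ℓ₀ ≤ s ∧ 0 < s →
      ((floorSet A ∩ cube a s).encard : ℝ≥0∞) / ENNReal.ofReal (s ^ α)
        ≤ ENNReal.ofReal e := by
    intro a s ⟨h1, _⟩
    have hs1 : 1 ≤ s := le_trans (le_max_left _ _) h1
    refine (term_le_general A a hs1 α).trans (ENNReal.ofReal_le_ofReal ?_)
    exact (hℓ₀ s (le_trans (le_max_right _ _) h1)).le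
  refine le_trans (iInf_le _ (max 1 ℓ₀)) ?_
  exact iSup_le fun a => iSup_le fun s => iSup_le fun hsp => key a s hsp

lemma massMeas_zero_of_card_lt {α : ℝ} (hα : (Fintype.card ι : ℝ) < α)
    (A : Set (EuclideanSpace ℝ ι)) : massMeas α A = 0 := by
  apply ennreal_zero_of_forall
  intro e he
  set d := Fintype.card ι
  have hneg : (0:ℝ) < α - d := by linarith
  have htend : Tendsto (fun s : ℝ => 2 ^ d * s ^ ((d : ℝ) - α)) atTop (nhds 0) := by
    have h := (tendsto_rpow_neg_atTop hneg).const_mul ((2:ℝ) ^ d)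
    simpa [neg_sub, mul_zero] using h
  obtain ⟨ℓ₀, hℓ₀⟩ := (htend.eventually_lt_const he).exists_forall_of_atTop
  have key : ∀ (ℓ : ℝ), max 1 ℓ₀ ≤ ℓ ∧ 0 < ℓ →
      ((floorSet A ∩ centeredCube ℓ).encard : ℝ≥0∞) / ENNReal.ofReal ((2 * ℓ) ^ α)
        ≤ ENNReal.ofReal e := by
    intro ℓ ⟨h1, hpos⟩
    have hs1 : (1:ℝ) ≤ 2 * ℓ := by
      have : (1:ℝ) ≤ ℓ := le_trans (le_max_left _ _) h1
      linarith
    have h2ℓ : ℓ₀ ≤ 2 * ℓ := by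
      have := le_trans (le_max_right _ _) h1; linarith
    refine (term_le_general A _ hs1 α).trans (ENNReal.ofReal_le_ofReal ?_)
    exact (hℓ₀ (2 * ℓ) h2ℓ).le
  refine le_trans (iInf_le _ (max 1 ℓ₀)) ?_
  exact iSup_le fun ℓ => iSup_le fun hsp => key ℓ hsp

lemma countMeas_zero_mono {α β : ℝ} (hαβ : α ≤ β) {A : Set (EuclideanSpace ℝ ι)}
    (h0 : countMeas α A = 0) : countMeas β A = 0 := by
  apply ennreal_zero_of_forall
  intro e he
  have hlt : countMeas α A < ENNReal.ofReal e := by rw [h0]; exact ENNReal.ofReal_pos.2 he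
  rw [countMeas] at hlt
  obtain ⟨ℓ, hℓ⟩ := iInf_lt_iff.1 hlt
  refine le_trans (iInf_le _ (max ℓ 1)) ?_
  refine iSup_le fun a => iSup_le fun s => iSup_le fun ⟨h1, h2⟩ => ?_
  have hs1 : (1:ℝ) ≤ s := le_trans (le_max_right _ _) h1
  have hterm : ((floorSet A ∩ cube a s).encard : ℝ≥0∞) / ENNReal.ofReal (s ^ β)
      ≤ ((floorSet A ∩ cube a s).encard : ℝ≥0∞) / ENNReal.ofReal (s ^ α) :=
    ENNReal.div_le_div_left
      (ENNReal.ofReal_le_ofReal (Real.rpow_le_rpow_of_exponent_le hs1 hαβ)) _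
  refine hterm.trans (le_trans ?_ hℓ.le)
  exact le_iSup_of_le a (le_iSup_of_le s
    (le_iSup_of_le ⟨le_trans (le_max_left _ _) h1, h2⟩ le_rfl))

lemma massMeas_zero_mono {α β : ℝ} (hαβ : α ≤ β) {A : Set (EuclideanSpace ℝ ι)}
    (h0 : massMeas α A = 0) : massMeas β A = 0 := by
  apply ennreal_zero_of_forall
  intro e he
  have hlt : massMeas α A < ENNReal.ofReal e := by rw [h0]; exact ENNReal.ofReal_pos.2 he
  rw [massMeas] at hlt
  obtain ⟨L, hL⟩ := iInf_lt_iff.1 hlt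
  refine le_trans (iInf_le _ (max L 1)) ?_
  refine iSup_le fun ℓ => iSup_le fun ⟨h1, h2⟩ => ?_
  have hs1 : (1:ℝ) ≤ 2 * ℓ := by
    have : (1:ℝ) ≤ ℓ := le_trans (le_max_right _ _) h1
    linarith
  have hterm : ((floorSet A ∩ centeredCube ℓ).encard : ℝ≥0∞) / ENNReal.ofReal ((2*ℓ) ^ β)
      ≤ ((floorSet A ∩ centeredCube ℓ).encard : ℝ≥0∞) / ENNReal.ofReal ((2*ℓ) ^ α) :=
    ENNReal.div_le_div_left
      (ENNReal.ofReal_le_ofReal (Real.rpow_le_rpow_of_exponent_le hs1 hαβ)) _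
  refine hterm.trans (le_trans ?_ hL.le)
  exact le_iSup_of_le ℓ (le_iSup_of_le ⟨le_trans (le_max_left _ _) h1, h2⟩ le_rfl)

/-! ### Dimension basics -/

lemma cdimSet_nonempty (A : Set (EuclideanSpace ℝ ι)) :
    {α : ℝ | 0 ≤ α ∧ countMeas α A = 0}.Nonempty :=
  ⟨Fintype.card ι + 1, by positivity,
    countMeas_zero_of_card_lt (lt_add_one _) A⟩

lemma mdimSet_nonempty (A : Set (EuclideanSpace ℝ ι)) :
    {α : ℝ | 0 ≤ α ∧ massMeas α A = 0}.Nonempty :=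
  ⟨Fintype.card ι + 1, by positivity,
    massMeas_zero_of_card_lt (lt_add_one _) A⟩

lemma cdimSet_bddBelow (A : Set (EuclideanSpace ℝ ι)) :
    BddBelow {α : ℝ | 0 ≤ α ∧ countMeas α A = 0} :=
  ⟨0, fun _ hx => hx.1⟩

lemma mdimSet_bddBelow (A : Set (EuclideanSpace ℝ ι)) :
    BddBelow {α : ℝ | 0 ≤ α ∧ massMeas α A = 0} :=
  ⟨0, fun _ hx => hx.1⟩

lemma cdim_nonneg (A : Set (EuclideanSpace ℝ ι)) : 0 ≤ cdim A :=
  le_csInf (cdimSet_nonempty A) fun _ hx => hx.1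

lemma mdim_nonneg (A : Set (EuclideanSpace ℝ ι)) : 0 ≤ mdim A :=
  le_csInf (mdimSet_nonempty A) fun _ hx => hx.1

lemma countMeas_cdim_add {c : ℝ} (hc : 0 < c) (A : Set (EuclideanSpace ℝ ι)) :
    countMeas (cdim A + c) A = 0 := by
  have h2 : sInf {α : ℝ | 0 ≤ α ∧ countMeas α A = 0} < cdim A + c :=
    lt_add_of_pos_right _ hc
  obtain ⟨x, hx, hxlt⟩ := (csInf_lt_iff (cdimSet_bddBelow A) (cdimSet_nonempty A)).1 h2
  exact countMeas_zero_mono hxlt.le hx.2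

lemma massMeas_mdim_add {c : ℝ} (hc : 0 < c) (A : Set (EuclideanSpace ℝ ι)) :
    massMeas (mdim A + c) A = 0 := by
  have h2 : sInf {α : ℝ | 0 ≤ α ∧ massMeas α A = 0} < mdim A + c :=
    lt_add_of_pos_right _ hc
  obtain ⟨x, hx, hxlt⟩ := (csInf_lt_iff (mdimSet_bddBelow A) (mdimSet_nonempty A)).1 h2
  exact massMeas_zero_mono hxlt.le hx.2

/-! ### Product space machinery -/

section prodaux
variable {m : ℕ} {dv : Fin m → ℕ}

def splitPt (x : EuclideanSpace ℝ ((i : Fin m) × Fin (dv i))) :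
    ∀ i, EuclideanSpace ℝ (Fin (dv i)) := fun i => WithLp.toLp 2 (fun j => x ⟨i, j⟩)

lemma splitPt_inj : Function.Injective (splitPt (m := m) (dv := dv)) := by
  intro x y h
  ext q
  exact congrArg (fun v => v q.2) (congrFun h q.1)

lemma splitPt_image (A : ∀ i, Set (EuclideanSpace ℝ (Fin (dv i))))
    (a : EuclideanSpace ℝ ((i : Fin m) × Fin (dv i))) (s : ℝ) :
    splitPt '' (floorSet (prodSet m dv A) ∩ cube a s)
      = Set.univ.pi (fun i => floorSet (A i) ∩ cube (splitPt a i) s) := by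
  ext z
  constructor
  · rintro ⟨x, ⟨⟨y, hy, rfl⟩, hc⟩, rfl⟩ i -
    exact ⟨⟨(WithLp.toLp 2 fun j => y ⟨i, j⟩), hy i, rfl⟩, fun j => hc ⟨i, j⟩⟩
  · intro hz
    choose y hyA hyz using fun i => (hz i (Set.mem_univ i)).1
    refine ⟨floorPt (WithLp.toLp 2 fun q : (i : Fin m) × Fin (dv i) => y q.1 q.2),
      ⟨⟨WithLp.toLp 2 fun q : (i : Fin m) × Fin (dv i) => y q.1 q.2, fun i => hyA i, rfl⟩, ?_⟩, ?_⟩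
    · rintro ⟨i, j⟩
      have hm := (hz i (Set.mem_univ i)).2 j
      have hzij : z i j = (⌊y i j⌋ : ℝ) := (congrArg (fun v => v j) (hyz i)).symm
      rw [hzij] at hm
      exact hm
    · funext i
      exact hyz i

lemma splitPt_image_centered (A : ∀ i, Set (EuclideanSpace ℝ (Fin (dv i)))) (ℓ : ℝ) :
    splitPt '' (floorSet (prodSet m dv A) ∩ centeredCube ℓ)
      = Set.univ.pi (fun i => floorSet (A i) ∩ centeredCube ℓ) :=
  splitPt_image A (WithLp.toLp 2 (fun _ => -ℓ)) (2 * ℓ)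

lemma countMeas_le_prod (A : ∀ i, Set (EuclideanSpace ℝ (Fin (dv i))))
    (hA : ∀ i, (A i).Nonempty) (α : ℝ) (i : Fin m) :
    countMeas α (A i) ≤ countMeas α (prodSet m dv A) := by
  classical
  choose p hp using hA
  refine le_iInf fun ℓ => ?_
  refine le_trans (iInf_le _ ℓ) ?_
  refine iSup_le fun ai => iSup_le fun s => iSup_le fun ⟨h1, h2⟩ => ?_
  set a : EuclideanSpace ℝ ((i : Fin m) × Fin (dv i)) :=
    WithLp.toLp 2 (fun q : (i : Fin m) × Fin (dv i) =>
      if h : q.1 = i then ai (Fin.cast (by rw [h]) q.2) else floorPt (p q.1) q.2)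
    with ha
  have hsplit_a : splitPt a i = ai := by
    refine PiLp.ext (p := 2) fun j => ?_
    show (if h : i = i then ai (Fin.cast _ j) else _) = ai j
    rw [dif_pos rfl]
    rfl
  have hsplit_ne : ∀ j, j ≠ i → splitPt a j = floorPt (p j) := by
    intro j hne
    ext k
    show (if h : j = i then _ else floorPt (p j) k) = floorPt (p j) k
    rw [dif_neg hne]
  have key : (floorSet (A i) ∩ cube ai s).encard
      ≤ (floorSet (prodSet m dv A) ∩ cube a s).encard := by
    rw [← Set.InjOn.encard_image (splitPt_inj.injOn), splitPt_image]
    have h := encard_le_pi' (t := fun i' => floorSet (A i') ∩ cube (splitPt a i') s) i ?_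
    · rwa [hsplit_a] at h
    · intro j hne
      refine ⟨floorPt (p j), ⟨p j, hp j, rfl⟩, ?_⟩
      rw [hsplit_ne j hne]
      exact fun k => ⟨le_refl _, lt_add_of_pos_right _ h2⟩
  refine le_trans (ENNReal.div_le_div (ENat.toENNReal_mono key) le_rfl) ?_
  exact le_iSup_of_le a (le_iSup_of_le s (le_iSup_of_le ⟨h1, h2⟩ le_rfl))

lemma massMeas_le_prod (A : ∀ i, Set (EuclideanSpace ℝ (Fin (dv i))))
    (hA : ∀ i, (A i).Nonempty) (α : ℝ) (i : Fin m) :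
    massMeas α (A i) ≤ massMeas α (prodSet m dv A) := by
  classical
  choose p hp using hA
  set L0 : ℝ := 1 + ∑ i', ∑ j, |((⌊p i' j⌋ : ℝ))| with hL0
  have habs : ∀ i' j, |((⌊p i' j⌋ : ℝ))| ≤ L0 - 1 := by
    intro i' j
    have h1 : |((⌊p i' j⌋ : ℝ))| ≤ ∑ j', |((⌊p i' j'⌋ : ℝ))| :=
      Finset.single_le_sum (f := fun j' => |((⌊p i' j'⌋ : ℝ))|)
        (fun _ _ => abs_nonneg _) (Finset.mem_univ j)
    have h2 : ∑ j', |((⌊p i' j'⌋ : ℝ))| ≤ ∑ i'', ∑ j', |((⌊p i'' j'⌋ : ℝ))| :=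
      Finset.single_le_sum (f := fun i'' => ∑ j', |((⌊p i'' j'⌋ : ℝ))|)
        (fun i'' _ => Finset.sum_nonneg fun _ _ => abs_nonneg _) (Finset.mem_univ i')
    simp only [hL0]
    linarith
  have hmem : ∀ (ℓ : ℝ), L0 ≤ ℓ → ∀ i',
      floorPt (p i') ∈ floorSet (A i') ∩ centeredCube ℓ := by
    intro ℓ hℓ i'
    refine ⟨⟨p i', hp i', rfl⟩, fun j => ?_⟩
    have h1 := abs_le.1 ((habs i' j).trans (by linarith))
    constructor
    · show -ℓ ≤ ((⌊p i' j⌋ : ℝ))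
      linarith [h1.1]
    · show ((⌊p i' j⌋ : ℝ)) < -ℓ + 2 * ℓ
      have : |((⌊p i' j⌋ : ℝ))| ≤ ℓ - 1 := (habs i' j).trans (by linarith)
      have h2 := (abs_le.1 this).2
      linarith
  refine le_iInf fun L => ?_
  refine le_trans (iInf_le _ (max L L0)) ?_
  refine iSup_le fun ℓ => iSup_le fun ⟨h1, h2⟩ => ?_
  have hL0ℓ : L0 ≤ ℓ := le_trans (le_max_right _ _) h1
  have key : (floorSet (A i) ∩ centeredCube ℓ).encard
      ≤ (floorSet (prodSet m dv A) ∩ centeredCube ℓ).encard := by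
    rw [← Set.InjOn.encard_image (splitPt_inj.injOn), splitPt_image_centered]
    exact encard_le_pi' i (fun j _ => ⟨floorPt (p j), hmem ℓ hL0ℓ j⟩)
  refine le_trans (ENNReal.div_le_div (ENat.toENNReal_mono key) le_rfl) ?_
  exact le_iSup_of_le ℓ (le_iSup_of_le ⟨le_trans (le_max_left _ _) h1, h2⟩ le_rfl)

lemma countMeas_prod_zero (A : ∀ i, Set (EuclideanSpace ℝ (Fin (dv i))))
    (hm : 0 < m) {α : Fin m → ℝ} (hα : ∀ i, 0 ≤ α i)
    (h0 : ∀ i, countMeas (α i) (A i) = 0) :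
    countMeas (∑ i, α i) (prodSet m dv A) = 0 := by
  classical
  apply ennreal_zero_of_forall
  intro e he
  set δ : ℝ≥0∞ := min (ENNReal.ofReal e) 1 with hδdef
  have hδpos : 0 < δ := lt_min (ENNReal.ofReal_pos.2 he) one_pos
  have hδ1 : δ ≤ 1 := min_le_right _ _
  have hδtop : δ ≠ ⊤ := (lt_of_le_of_lt hδ1 ENNReal.one_lt_top).ne
  have hδe : δ ^ m ≤ ENNReal.ofReal e := by
    calc δ ^ m ≤ δ ^ 1 := pow_le_pow_of_le_one zero_le hδ1 hm
      _ = δ := pow_one δ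
      _ ≤ _ := min_le_left _ _
  have hex : ∀ i, ∃ ℓi : ℝ,
      (⨆ (a : EuclideanSpace ℝ (Fin (dv i))) (s : ℝ) (_ : ℓi ≤ s ∧ 0 < s),
        ((floorSet (A i) ∩ cube a s).encard : ℝ≥0∞) / ENNReal.ofReal (s ^ (α i))) < δ := by
    intro i
    have h : countMeas (α i) (A i) < δ := by rw [h0 i]; exact hδpos
    rw [countMeas] at h
    exact iInf_lt_iff.1 h
  choose ℓv hℓv using hex
  set L : ℝ := 1 + ∑ i, max (ℓv i) 0 with hL
  have hsum0 : (0:ℝ) ≤ ∑ i, max (ℓv i) 0 :=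
    Finset.sum_nonneg fun i _ => le_max_right _ _
  have hL1 : (1:ℝ) ≤ L := by simp only [hL]; linarith
  have hLi : ∀ i, ℓv i ≤ L := by
    intro i
    have h1 : max (ℓv i) 0 ≤ ∑ j, max (ℓv j) 0 :=
      Finset.single_le_sum (f := fun j => max (ℓv j) 0)
        (fun j _ => le_max_right _ _) (Finset.mem_univ i)
    have h2 := le_max_left (ℓv i) 0
    simp only [hL]
    linarith
  refine le_trans (iInf_le _ L) (iSup_le fun a => iSup_le fun s => iSup_le fun ⟨h1, h2⟩ => ?_)
  have hs1 : (1:ℝ) ≤ s := le_trans hL1 h1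
  have hs0 : (0:ℝ) < s := h2
  have hfac : ∀ i, ((floorSet (A i) ∩ cube (splitPt a i) s).encard : ℝ≥0∞)
      ≤ δ * ENNReal.ofReal (s ^ (α i)) := by
    intro i
    have hterm : ((floorSet (A i) ∩ cube (splitPt a i) s).encard : ℝ≥0∞)
        / ENNReal.ofReal (s ^ (α i)) ≤ δ := by
      refine le_trans ?_ (hℓv i).le
      exact le_iSup_of_le (splitPt a i)
        (le_iSup_of_le s (le_iSup_of_le ⟨le_trans (hLi i) h1, h2⟩ le_rfl))
    have hb0 : ENNReal.ofReal (s ^ (α i)) ≠ 0 :=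
      (ENNReal.ofReal_pos.2 (Real.rpow_pos_of_pos hs0 _)).ne'
    exact (ENNReal.div_le_iff_le_mul (Or.inl hb0) (Or.inl ENNReal.ofReal_ne_top)).1 hterm
  have hfin : ∀ i, (floorSet (A i) ∩ cube (splitPt a i) s).Finite := by
    intro i
    rw [← Set.encard_lt_top_iff]
    by_contra hcon
    rw [not_lt, top_le_iff] at hcon
    have h := hfac i
    rw [hcon] at h
    simp only [ENat.toENNReal_top, top_le_iff] at h
    exact ENNReal.mul_ne_top hδtop ENNReal.ofReal_ne_top h
  have hcount : ((floorSet (prodSet m dv A) ∩ cube a s).encard : ℝ≥0∞)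
      = ∏ i, ((floorSet (A i) ∩ cube (splitPt a i) s).encard : ℝ≥0∞) := by
    have h1' : (floorSet (prodSet m dv A) ∩ cube a s).encard
        = ∏ i, (floorSet (A i) ∩ cube (splitPt a i) s).encard := by
      rw [← Set.InjOn.encard_image (splitPt_inj.injOn), splitPt_image, encard_pi _ hfin]
    rw [h1']
    exact map_prod ENat.toENNRealRingHom _ _
  have hprod_eq : ENNReal.ofReal (s ^ (∑ i, α i)) = ∏ i, ENNReal.ofReal (s ^ (α i)) := by
    rw [Real.rpow_sum_of_pos hs0,
      ENNReal.ofReal_prod_of_nonneg (fun i _ => (Real.rpow_pos_of_pos hs0 _).le)]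
  calc ((floorSet (prodSet m dv A) ∩ cube a s).encard : ℝ≥0∞)
        / ENNReal.ofReal (s ^ (∑ i, α i))
      = (∏ i, ((floorSet (A i) ∩ cube (splitPt a i) s).encard : ℝ≥0∞))
        / ENNReal.ofReal (s ^ (∑ i, α i)) := by rw [hcount]
    _ ≤ (∏ i, (δ * ENNReal.ofReal (s ^ (α i))))
        / ENNReal.ofReal (s ^ (∑ i, α i)) :=
        ENNReal.div_le_div (Finset.prod_le_prod' fun i _ => hfac i) le_rfl
    _ = (δ ^ m * ∏ i, ENNReal.ofReal (s ^ (α i)))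
        / ENNReal.ofReal (s ^ (∑ i, α i)) := by
        rw [Finset.prod_mul_distrib, Finset.prod_const, Finset.card_univ, Fintype.card_fin]
    _ = δ ^ m * (ENNReal.ofReal (s ^ (∑ i, α i)) / ENNReal.ofReal (s ^ (∑ i, α i))) := by
        rw [hprod_eq, mul_div_assoc]
    _ = δ ^ m := by
        rw [ENNReal.div_self
          ((ENNReal.ofReal_pos.2 (Real.rpow_pos_of_pos hs0 _)).ne')
          ENNReal.ofReal_ne_top, mul_one]
    _ ≤ ENNReal.ofReal e := hδe

lemma massMeas_prod_zero (A : ∀ i, Set (EuclideanSpace ℝ (Fin (dv i))))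
    (hm : 0 < m) {α : Fin m → ℝ} (hα : ∀ i, 0 ≤ α i)
    (h0 : ∀ i, massMeas (α i) (A i) = 0) :
    massMeas (∑ i, α i) (prodSet m dv A) = 0 := by
  classical
  apply ennreal_zero_of_forall
  intro e he
  set δ : ℝ≥0∞ := min (ENNReal.ofReal e) 1 with hδdef
  have hδpos : 0 < δ := lt_min (ENNReal.ofReal_pos.2 he) one_pos
  have hδ1 : δ ≤ 1 := min_le_right _ _
  have hδtop : δ ≠ ⊤ := (lt_of_le_of_lt hδ1 ENNReal.one_lt_top).ne
  have hδe : δ ^ m ≤ ENNReal.ofReal e := by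
    calc δ ^ m ≤ δ ^ 1 := pow_le_pow_of_le_one zero_le hδ1 hm
      _ = δ := pow_one δ
      _ ≤ _ := min_le_left _ _
  have hex : ∀ i, ∃ Li : ℝ,
      (⨆ (ℓ : ℝ) (_ : Li ≤ ℓ ∧ 0 < ℓ),
        ((floorSet (A i) ∩ centeredCube ℓ).encard : ℝ≥0∞)
          / ENNReal.ofReal ((2 * ℓ) ^ (α i))) < δ := by
    intro i
    have h : massMeas (α i) (A i) < δ := by rw [h0 i]; exact hδpos
    rw [massMeas] at h
    exact iInf_lt_iff.1 h
  choose Lv hLv using hex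
  set L : ℝ := 1 + ∑ i, max (Lv i) 0 with hL
  have hsum0 : (0:ℝ) ≤ ∑ i, max (Lv i) 0 :=
    Finset.sum_nonneg fun i _ => le_max_right _ _
  have hL1 : (1:ℝ) ≤ L := by simp only [hL]; linarith
  have hLi : ∀ i, Lv i ≤ L := by
    intro i
    have h1 : max (Lv i) 0 ≤ ∑ j, max (Lv j) 0 :=
      Finset.single_le_sum (f := fun j => max (Lv j) 0)
        (fun j _ => le_max_right _ _) (Finset.mem_univ i)
    have h2 := le_max_left (Lv i) 0
    simp only [hL]
    linarith
  refine le_trans (iInf_le _ L) (iSup_le fun ℓ => iSup_le fun ⟨h1, h2⟩ => ?_)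
  have hs1 : (1:ℝ) ≤ ℓ := le_trans hL1 h1
  have hs0 : (0:ℝ) < 2 * ℓ := by linarith
  have hfac : ∀ i, ((floorSet (A i) ∩ centeredCube ℓ).encard : ℝ≥0∞)
      ≤ δ * ENNReal.ofReal ((2 * ℓ) ^ (α i)) := by
    intro i
    have hterm : ((floorSet (A i) ∩ centeredCube ℓ).encard : ℝ≥0∞)
        / ENNReal.ofReal ((2 * ℓ) ^ (α i)) ≤ δ := by
      refine le_trans ?_ (hLv i).le
      exact le_iSup_of_le ℓ (le_iSup_of_le ⟨le_trans (hLi i) h1, by linarith⟩ le_rfl)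
    have hb0 : ENNReal.ofReal ((2 * ℓ) ^ (α i)) ≠ 0 :=
      (ENNReal.ofReal_pos.2 (Real.rpow_pos_of_pos hs0 _)).ne'
    exact (ENNReal.div_le_iff_le_mul (Or.inl hb0) (Or.inl ENNReal.ofReal_ne_top)).1 hterm
  have hfin : ∀ i, (floorSet (A i) ∩ centeredCube ℓ).Finite := by
    intro i
    rw [← Set.encard_lt_top_iff]
    by_contra hcon
    rw [not_lt, top_le_iff] at hcon
    have h := hfac i
    rw [hcon] at h
    simp only [ENat.toENNReal_top, top_le_iff] at h
    exact ENNReal.mul_ne_top hδtop ENNReal.ofReal_ne_top h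
  have hcount : ((floorSet (prodSet m dv A) ∩ centeredCube ℓ).encard : ℝ≥0∞)
      = ∏ i, ((floorSet (A i) ∩ centeredCube ℓ).encard : ℝ≥0∞) := by
    have h1' : (floorSet (prodSet m dv A) ∩ centeredCube ℓ).encard
        = ∏ i, (floorSet (A i) ∩ centeredCube ℓ).encard := by
      rw [← Set.InjOn.encard_image (splitPt_inj.injOn), splitPt_image_centered,
        encard_pi _ hfin]
    rw [h1']
    exact map_prod ENat.toENNRealRingHom _ _
  have hprod_eq : ENNReal.ofReal ((2 * ℓ) ^ (∑ i, α i))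
      = ∏ i, ENNReal.ofReal ((2 * ℓ) ^ (α i)) := by
    rw [Real.rpow_sum_of_pos hs0,
      ENNReal.ofReal_prod_of_nonneg (fun i _ => (Real.rpow_pos_of_pos hs0 _).le)]
  calc ((floorSet (prodSet m dv A) ∩ centeredCube ℓ).encard : ℝ≥0∞)
        / ENNReal.ofReal ((2 * ℓ) ^ (∑ i, α i))
      = (∏ i, ((floorSet (A i) ∩ centeredCube ℓ).encard : ℝ≥0∞))
        / ENNReal.ofReal ((2 * ℓ) ^ (∑ i, α i)) := by rw [hcount]
    _ ≤ (∏ i, (δ * ENNReal.ofReal ((2 * ℓ) ^ (α i))))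
        / ENNReal.ofReal ((2 * ℓ) ^ (∑ i, α i)) :=
        ENNReal.div_le_div (Finset.prod_le_prod' fun i _ => hfac i) le_rfl
    _ = (δ ^ m * ∏ i, ENNReal.ofReal ((2 * ℓ) ^ (α i)))
        / ENNReal.ofReal ((2 * ℓ) ^ (∑ i, α i)) := by
        rw [Finset.prod_mul_distrib, Finset.prod_const, Finset.card_univ, Fintype.card_fin]
    _ = δ ^ m * (ENNReal.ofReal ((2 * ℓ) ^ (∑ i, α i))
        / ENNReal.ofReal ((2 * ℓ) ^ (∑ i, α i))) := by
        rw [hprod_eq, mul_div_assoc]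
    _ = δ ^ m := by
        rw [ENNReal.div_self
          ((ENNReal.ofReal_pos.2 (Real.rpow_pos_of_pos hs0 _)).ne')
          ENNReal.ofReal_ne_top, mul_one]
    _ ≤ ENNReal.ofReal e := hδe

end prodaux

/-- Dimension bounds for product sets: for non-empty `A_i ⊆ ℝ^{d_i}`,
`max_i cdim(A_i) ≤ cdim(A_1 × ⋯ × A_m) ≤ Σ_i cdim(A_i)`, and likewise for `mdim`. -/
theorem stmt_12 (m : ℕ) (dv : Fin m → ℕ)
    (A : ∀ i, Set (EuclideanSpace ℝ (Fin (dv i)))) (hA : ∀ i, (A i).Nonempty) :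
    (∀ i, cdim (A i) ≤ cdim (prodSet m dv A)) ∧
    (cdim (prodSet m dv A) ≤ ∑ i, cdim (A i)) ∧
    (∀ i, mdim (A i) ≤ mdim (prodSet m dv A)) ∧
    (mdim (prodSet m dv A) ≤ ∑ i, mdim (A i)) := by
  refine ⟨?_, ?_, ?_, ?_⟩
  · intro i
    refine csInf_le_csInf (cdimSet_bddBelow _) (cdimSet_nonempty _) ?_
    intro x hx
    exact ⟨hx.1, le_antisymm (hx.2 ▸ countMeas_le_prod A hA x i) zero_le⟩
  · rcases Nat.eq_zero_or_pos m with rfl | hm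
    · -- m = 0
      rw [Finset.univ_eq_empty, Finset.sum_empty]
      refine le_of_forall_pos_le_add fun ε hε => ?_
      rw [zero_add]
      refine csInf_le (cdimSet_bddBelow _) ⟨hε.le, ?_⟩
      refine countMeas_zero_of_card_lt ?_ _
      simpa using hε
    · refine le_of_forall_pos_le_add fun ε hε => ?_
      have hεm : 0 < ε / m := by positivity
      have hzero : countMeas (∑ i, (cdim (A i) + ε / m)) (prodSet m dv A) = 0 :=
        countMeas_prod_zero A hm
          (fun i => by linarith [cdim_nonneg (A i)])
          (fun i => countMeas_cdim_add hεm (A i))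
      have hsum : ∑ i, (cdim (A i) + ε / m) = (∑ i, cdim (A i)) + ε := by
        rw [Finset.sum_add_distrib, Finset.sum_const, Finset.card_univ, Fintype.card_fin,
          nsmul_eq_mul]
        congr 1
        field_simp
      rw [hsum] at hzero
      refine csInf_le (cdimSet_bddBelow _) ⟨?_, hzero⟩
      have := cdim_nonneg (A := prodSet m dv A)
      have hnn : 0 ≤ ∑ i, cdim (A i) :=
        Finset.sum_nonneg fun i _ => cdim_nonneg (A i)
      linarith
  · intro i
    refine csInf_le_csInf (mdimSet_bddBelow _) (mdimSet_nonempty _) ?_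
    intro x hx
    exact ⟨hx.1, le_antisymm (hx.2 ▸ massMeas_le_prod A hA x i) zero_le⟩
  · rcases Nat.eq_zero_or_pos m with rfl | hm
    · rw [Finset.univ_eq_empty, Finset.sum_empty]
      refine le_of_forall_pos_le_add fun ε hε => ?_
      rw [zero_add]
      refine csInf_le (mdimSet_bddBelow _) ⟨hε.le, ?_⟩
      refine massMeas_zero_of_card_lt ?_ _
      simpa using hε
    · refine le_of_forall_pos_le_add fun ε hε => ?_
      have hεm : 0 < ε / m := by positivity
      have hzero : massMeas (∑ i, (mdim (A i) + ε / m)) (prodSet m dv A) = 0 :=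
        massMeas_prod_zero A hm
          (fun i => by linarith [mdim_nonneg (A i)])
          (fun i => massMeas_mdim_add hεm (A i))
      have hsum : ∑ i, (mdim (A i) + ε / m) = (∑ i, mdim (A i)) + ε := by
        rw [Finset.sum_add_distrib, Finset.sum_const, Finset.card_univ, Fintype.card_fin,
          nsmul_eq_mul]
        congr 1
        field_simp
      rw [hsum] at hzero
      refine csInf_le (mdimSet_bddBelow _) ⟨?_, hzero⟩
      have hnn : 0 ≤ ∑ i, mdim (A i) :=
        Finset.sum_nonneg fun i _ => mdim_nonneg (A i)
      linarith
end
end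

section
/- Fix d ≥ 2, 1 ≤ k ≤ d−1, and a compact set 𝓜 of real k×(d−k) matrices. There exists a constant c = c(k,d,𝓜) > 0 such that for all z, z' ∈ ℤ^d with z ≠ z', m(𝓜_{z,z'}) ≤ c·|z − z'|^{−k}, where m is Lebesgue measure on the space of k×(d−k) real matrices, |·| is the Euclidean norm on ℝ^d, and 𝓜_{z,z'} = {M ∈ 𝓜 : ⌊P_M z⌋ = ⌊P_M z'⌋}. -/
open Set MeasureTheory Filter
open scoped ENNReal NNReal

noncomputable section

variable {ι : Type*} [Fintype ι]

/-- The oblique projection `P_M : ℝ^d → ℝ^d` (with `ℝ^d = ℝ^k × ℝ^{d-k}` realized via the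
index type `Fin k ⊕ Fin m`, `m = d - k`) given by `P_M (x, y) = (x + M y, 0)`. -/
def projMat {k m : ℕ} (M : Fin k → Fin m → ℝ) (x : EuclideanSpace ℝ (Fin k ⊕ Fin m)) :
    EuclideanSpace ℝ (Fin k ⊕ Fin m) :=
  WithLp.toLp 2 (fun j => Sum.elim (fun i => x (Sum.inl i) + ∑ l, M i l * x (Sum.inr l))
    (fun _ => (0 : ℝ)) j)

/-- The embedding of the lattice `ℤ^d` into `ℝ^d`. -/
def latticeEmbed {k m : ℕ} (z : (Fin k ⊕ Fin m) → ℤ) : EuclideanSpace ℝ (Fin k ⊕ Fin m) :=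
  WithLp.toLp 2 (fun i => (z i : ℝ))

/-- The coordinatewise integer floor of a point of `ℝ^d`. -/
def intFloor {k m : ℕ} (x : EuclideanSpace ℝ (Fin k ⊕ Fin m)) : (Fin k ⊕ Fin m) → ℤ :=
  fun i => ⌊x i⌋


lemma floor_eq_abs_sub_lt_one {u v : ℝ} (h : ⌊u⌋ = ⌊v⌋) : |u - v| < 1 := by
  have h1 : u - v = Int.fract u - Int.fract v := by
    rw [Int.fract, Int.fract, h]; ring
  have h2 := Int.fract_nonneg u
  have h3 := Int.fract_lt_one u
  have h4 := Int.fract_nonneg v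
  have h5 := Int.fract_lt_one v
  rw [h1, abs_sub_lt_iff]
  constructor <;> linarith

lemma slab_bound (m' : ℕ) (α c R : ℝ) (hc : c ≠ 0) (b' : Fin m' → ℝ) :
    (volume.prod (volume : Measure (Fin m' → ℝ)))
      {p : ℝ × (Fin m' → ℝ) | |α + c * p.1 + ∑ j, p.2 j * b' j| < 1 ∧ ∀ j, |p.2 j| ≤ R}
      ≤ ENNReal.ofReal (2 / |c|) * ENNReal.ofReal (2 * R) ^ m' := by
  set Box : Set (Fin m' → ℝ) := Set.pi univ fun _ => Icc (-R) R with hBox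
  have hBoxm : MeasurableSet Box := MeasurableSet.univ_pi fun _ => measurableSet_Icc
  set A : Set (ℝ × (Fin m' → ℝ)) :=
    {p | |α + c * p.1 + ∑ j, p.2 j * b' j| < 1 ∧ ∀ j, |p.2 j| ≤ R} with hA
  have hAeq : A = {p : ℝ × (Fin m' → ℝ) | |α + c * p.1 + ∑ j, p.2 j * b' j| < 1}
      ∩ (Prod.snd ⁻¹' Box) := by
    ext p
    simp [hA, hBox, Set.mem_pi, abs_le, Pi.le_def]
    aesop
  have hf : Measurable fun p : ℝ × (Fin m' → ℝ) => |α + c * p.1 + ∑ j, p.2 j * b' j| := by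
    fun_prop
  have hAm : MeasurableSet A := by
    rw [hAeq]
    exact (measurableSet_lt hf measurable_const).inter (hBoxm.preimage measurable_snd)
  rw [Measure.prod_apply_symm hAm]
  have hbound : ∀ y : Fin m' → ℝ, volume ((fun x => (x, y)) ⁻¹' A)
      ≤ Box.indicator (fun _ => ENNReal.ofReal (2 / |c|)) y := by
    intro y
    by_cases hy : y ∈ Box
    · rw [Set.indicator_of_mem hy]
      have hsub : (fun x => (x, y)) ⁻¹' A ⊆ Metric.ball (-((α + ∑ j, y j * b' j) / c)) (1 / |c|) := by
        intro x hx
        have hx1 : |α + c * x + ∑ j, y j * b' j| < 1 := hx.1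
        have hcpos : 0 < |c| := abs_pos.mpr hc
        rw [Metric.mem_ball, Real.dist_eq]
        rw [sub_neg_eq_add]
        have : |x + (α + ∑ j, y j * b' j) / c| = |α + c * x + ∑ j, y j * b' j| / |c| := by
          rw [← abs_div]
          congr 1
          field_simp
          ring
        rw [this, div_lt_div_iff₀ hcpos hcpos]
        nlinarith
      calc volume ((fun x => (x, y)) ⁻¹' A) ≤ _ := measure_mono hsub
        _ = ENNReal.ofReal (2 * (1 / |c|)) := Real.volume_ball _ _
        _ = ENNReal.ofReal (2 / |c|) := by rw [mul_one_div]
    · rw [Set.indicator_of_notMem hy]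
      have : (fun x => (x, y)) ⁻¹' A = ∅ := by
        ext x
        simp only [Set.mem_preimage, Set.mem_empty_iff_false, iff_false]
        intro hx
        refine hy ?_
        simp only [hBox, Set.mem_pi, Set.mem_univ, forall_true_left, Set.mem_Icc, true_implies]
        exact fun j => abs_le.mp (hx.2 j)
      simp [this]
  calc (∫⁻ y, volume ((fun x => (x, y)) ⁻¹' A)) ≤
      ∫⁻ y, Box.indicator (fun _ => ENNReal.ofReal (2 / |c|)) y := lintegral_mono hbound
    _ = ENNReal.ofReal (2 / |c|) * volume Box := lintegral_indicator_const hBoxm _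
    _ = ENNReal.ofReal (2 / |c|) * ENNReal.ofReal (2 * R) ^ m' := by
        rw [hBox, volume_pi_pi]
        have h2R : R - -R = 2 * R := by ring
        simp [Real.volume_Icc, h2R, Finset.prod_const]

lemma row_bound (m' : ℕ) (α R : ℝ) (b : Fin (m' + 1) → ℝ) (l : Fin (m' + 1)) (hc : b l ≠ 0) :
    volume {v : Fin (m' + 1) → ℝ | |α + ∑ j, v j * b j| < 1 ∧ ∀ j, |v j| ≤ R}
      ≤ ENNReal.ofReal (2 / |b l|) * ENNReal.ofReal (2 * R) ^ m' := by
  set e := MeasurableEquiv.piFinSuccAbove (fun _ : Fin (m' + 1) => ℝ) l with he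
  set A : Set (ℝ × (Fin m' → ℝ)) :=
    {p | |α + b l * p.1 + ∑ j, p.2 j * b (l.succAbove j)| < 1 ∧ ∀ j, |p.2 j| ≤ R} with hA
  have hfm : Measurable fun p : ℝ × (Fin m' → ℝ) =>
      |α + b l * p.1 + ∑ j, p.2 j * b (l.succAbove j)| := by fun_prop
  have hAm : MeasurableSet A := by
    have h1 : MeasurableSet {p : ℝ × (Fin m' → ℝ) |
        |α + b l * p.1 + ∑ j, p.2 j * b (l.succAbove j)| < 1} :=
      measurableSet_lt hfm measurable_const
    have h2 : MeasurableSet {p : ℝ × (Fin m' → ℝ) | ∀ j, |p.2 j| ≤ R} := by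
      have : {p : ℝ × (Fin m' → ℝ) | ∀ j, |p.2 j| ≤ R}
          = Prod.snd ⁻¹' (Set.pi univ fun _ : Fin m' => Icc (-R) R) := by
        ext p; simp [Set.mem_pi, abs_le, Pi.le_def]
        aesop
      rw [this]
      exact (MeasurableSet.univ_pi fun _ => measurableSet_Icc).preimage measurable_snd
    exact h1.inter h2
  have hev : ∀ v : Fin (m' + 1) → ℝ, e v = (v l, fun j => v (l.succAbove j)) := fun v => rfl
  have hsub : {v : Fin (m' + 1) → ℝ | |α + ∑ j, v j * b j| < 1 ∧ ∀ j, |v j| ≤ R}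
      ⊆ e ⁻¹' A := by
    intro v hv
    simp only [Set.mem_preimage, hev, hA, Set.mem_setOf_eq]
    constructor
    · have hsum : ∑ j, v j * b j = v l * b l + ∑ j, v (l.succAbove j) * b (l.succAbove j) :=
        Fin.sum_univ_succAbove (fun j => v j * b j) l
      have : α + b l * v l + ∑ j, v (l.succAbove j) * b (l.succAbove j)
          = α + ∑ j, v j * b j := by rw [hsum]; ring
      rw [this]; exact hv.1
    · exact fun j => hv.2 _
  calc volume {v : Fin (m' + 1) → ℝ | |α + ∑ j, v j * b j| < 1 ∧ ∀ j, |v j| ≤ R}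
      ≤ volume (e ⁻¹' A) := measure_mono hsub
    _ = ((volume : Measure ℝ).prod (Measure.pi fun _ => (volume : Measure ℝ))) A := by
        rw [volume_pi]
        exact (measurePreserving_piFinSuccAbove (fun _ : Fin (m' + 1) => (volume : Measure ℝ))
          l).measure_preimage hAm.nullMeasurableSet
    _ ≤ ENNReal.ofReal (2 / |b l|) * ENNReal.ofReal (2 * R) ^ m' := by
        rw [← volume_pi]
        exact slab_bound m' α (b l) R hc (fun j => b (l.succAbove j))

/-- Transversality: for a compact set `𝓜` of `k × (d-k)` matrices there is `c > 0` such that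
for distinct lattice points `z ≠ z'` the set of `M ∈ 𝓜` with `⌊P_M z⌋ = ⌊P_M z'⌋` has
Lebesgue measure at most `c · |z - z'|^{-k}` (Euclidean norm). -/
theorem stmt_13 (k m : ℕ) (hk : 1 ≤ k) (hm : 1 ≤ m)
    (𝓜 : Set (Fin k → Fin m → ℝ)) (hcomp : IsCompact 𝓜) :
    ∃ c > (0 : ℝ), ∀ z z' : (Fin k ⊕ Fin m) → ℤ, z ≠ z' →
      volume {M : Fin k → Fin m → ℝ | M ∈ 𝓜 ∧
          intFloor (projMat M (latticeEmbed z)) = intFloor (projMat M (latticeEmbed z'))} ≤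
        ENNReal.ofReal (c * dist (latticeEmbed z) (latticeEmbed z') ^ (-(k : ℝ))) := by
  obtain ⟨m', rfl⟩ : ∃ m', m = m' + 1 := ⟨m - 1, (Nat.succ_pred_eq_of_pos hm).symm⟩
  obtain ⟨C, hC⟩ := hcomp.isBounded.exists_norm_le
  set R : ℝ := max C 1 with hRdef
  have hR1 : (1 : ℝ) ≤ R := le_max_right _ _
  have hR0 : (0 : ℝ) < R := lt_of_lt_of_le one_pos hR1
  have hMR : ∀ M ∈ 𝓜, ∀ i l, |M i l| ≤ R := by
    intro M hM i l
    calc |M i l| = ‖M i l‖ := rfl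
      _ ≤ ‖M i‖ := norm_le_pi_norm (M i) l
      _ ≤ ‖M‖ := norm_le_pi_norm M i
      _ ≤ C := hC M hM
      _ ≤ R := le_max_left _ _
  set C₁ : ℝ := (k : ℝ) * (1 + R * (m' + 1)) + (m' + 1) with hC₁def
  have hC₁pos : 0 < C₁ := by positivity
  refine ⟨(2 * C₁ * (2 * R) ^ m') ^ k, by positivity, ?_⟩
  intro z z' hzz
  set a : Fin k → ℝ := fun i => (z (Sum.inl i) : ℝ) - z' (Sum.inl i) with ha
  set b : Fin (m' + 1) → ℝ := fun l => (z (Sum.inr l) : ℝ) - z' (Sum.inr l) with hb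
  set S : Set (Fin k → Fin (m' + 1) → ℝ) := {M | M ∈ 𝓜 ∧
      intFloor (projMat M (latticeEmbed z)) = intFloor (projMat M (latticeEmbed z'))} with hSdef
  have key : ∀ M ∈ S, ∀ i, |a i + ∑ l, M i l * b l| < 1 := by
    intro M hM i
    have h := congrFun hM.2 (Sum.inl i)
    simp only [intFloor, projMat, latticeEmbed, PiLp.toLp_apply, Sum.elim_inl] at h
    have h2 := floor_eq_abs_sub_lt_one h
    have heq : ((z (Sum.inl i) : ℝ) + ∑ l, M i l * (z (Sum.inr l) : ℝ))
        - ((z' (Sum.inl i) : ℝ) + ∑ l, M i l * (z' (Sum.inr l) : ℝ))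
        = a i + ∑ l, M i l * b l := by
      rw [ha, hb]
      have hterm : ∀ l : Fin (m' + 1), M i l * ((z (Sum.inr l) : ℝ) - (z' (Sum.inr l) : ℝ))
          = M i l * (z (Sum.inr l) : ℝ) - M i l * (z' (Sum.inr l) : ℝ) := fun l => by ring
      simp only [hterm, Finset.sum_sub_distrib]
      ring
    rwa [heq] at h2
  rcases Set.eq_empty_or_nonempty S with hSe | ⟨M₀, hM₀⟩
  · rw [hSe]
    simp only [measure_empty]
    exact zero_le
  have habint : ∀ j : Fin k ⊕ Fin (m' + 1), z j ≠ z' j → (1 : ℝ) ≤ |(z j : ℝ) - z' j| := by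
    intro j hj
    have h1 : (1 : ℤ) ≤ |z j - z' j| := Int.one_le_abs (sub_ne_zero.mpr hj)
    have h2 : ((|z j - z' j| : ℤ) : ℝ) = |(z j : ℝ) - z' j| := by push_cast; ring_nf
    exact_mod_cast h2 ▸ (by exact_mod_cast h1 : (1 : ℝ) ≤ ((|z j - z' j| : ℤ) : ℝ))
  by_cases hball : ∀ l, b l = 0
  · exfalso
    have hex : ∃ i : Fin k, z (Sum.inl i) ≠ z' (Sum.inl i) := by
      by_contra hno
      push_neg at hno
      apply hzz
      funext j
      rcases j with i | l
      · exact hno i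
      · have h0 := hball l
        rw [hb] at h0
        have h0' : ((z (Sum.inr l) : ℝ)) = ((z' (Sum.inr l) : ℝ)) := by
          have := sub_eq_zero.mp h0
          linarith [this]
        exact_mod_cast h0'
    obtain ⟨i, hi⟩ := hex
    have h1 := key M₀ hM₀ i
    have h2 : ∑ l, M₀ i l * b l = 0 := by
      apply Finset.sum_eq_zero
      intro l _
      rw [hball l, mul_zero]
    rw [h2, add_zero] at h1
    have h3 := habint (Sum.inl i) hi
    rw [ha] at h1
    have h4 : |a i| = |(z (Sum.inl i) : ℝ) - z' (Sum.inl i)| := by rw [ha]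
    rw [← h4] at h3
    linarith [h1, h3]
  push_neg at hball
  obtain ⟨l₀, hl₀⟩ := hball
  obtain ⟨lmax, -, hlmax⟩ := Finset.exists_max_image Finset.univ (fun l => |b l|)
    ⟨l₀, Finset.mem_univ l₀⟩
  have hlmax' : ∀ l, |b l| ≤ |b lmax| := fun l => hlmax l (Finset.mem_univ l)
  have hc1 : (1 : ℝ) ≤ |b lmax| := by
    have hzl : z (Sum.inr l₀) ≠ z' (Sum.inr l₀) := by
      intro h
      apply hl₀
      rw [hb]
      simp [h]
    calc (1 : ℝ) ≤ |b l₀| := habint (Sum.inr l₀) hzl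
      _ ≤ |b lmax| := hlmax' l₀
  have hc0 : b lmax ≠ 0 := by
    intro h
    rw [h, abs_zero] at hc1
    linarith
  have hcpos : 0 < |b lmax| := by linarith
  set D : ℝ := dist (latticeEmbed z) (latticeEmbed z') with hDdef
  have hD0 : 0 < D := by
    rw [hDdef]
    apply dist_pos.mpr
    intro h
    apply hzz
    funext j
    have := congrArg (fun v => v j) h
    simp only [latticeEmbed, PiLp.toLp_apply] at this
    exact_mod_cast this
  have habs : ∀ i, |a i| ≤ (1 + R * (m' + 1)) * |b lmax| := by
    intro i
    have h1 := key M₀ hM₀ i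
    have h2 : |a i| ≤ |a i + ∑ l, M₀ i l * b l| + |∑ l, M₀ i l * b l| := by
      have hrw : (a i + ∑ l, M₀ i l * b l) + (-(∑ l, M₀ i l * b l)) = a i := by ring
      calc |a i| = |(a i + ∑ l, M₀ i l * b l) + (-(∑ l, M₀ i l * b l))| := by rw [hrw]
        _ ≤ |a i + ∑ l, M₀ i l * b l| + |-(∑ l, M₀ i l * b l)| := abs_add_le _ _
        _ = |a i + ∑ l, M₀ i l * b l| + |∑ l, M₀ i l * b l| := by rw [abs_neg]
    have h3 : |∑ l, M₀ i l * b l| ≤ (m' + 1) * (R * |b lmax|) := by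
      calc |∑ l, M₀ i l * b l| ≤ ∑ l, |M₀ i l * b l| := Finset.abs_sum_le_sum_abs _ _
        _ ≤ ∑ _l : Fin (m' + 1), R * |b lmax| := by
            apply Finset.sum_le_sum
            intro l _
            rw [abs_mul]
            exact mul_le_mul (hMR M₀ hM₀.1 i l) (hlmax' l) (abs_nonneg _)
              (le_trans (abs_nonneg _) (hMR M₀ hM₀.1 i l))
        _ = (m' + 1) * (R * |b lmax|) := by
            rw [Finset.sum_const, Finset.card_univ, Fintype.card_fin, nsmul_eq_mul]
            push_cast
            ring
    have h4 : |a i| ≤ 1 + (m' + 1) * (R * |b lmax|) := by linarith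
    nlinarith
  have hDle : D ≤ C₁ * |b lmax| := by
    have hsum : D ≤ ∑ j : Fin k ⊕ Fin (m' + 1), |(z j : ℝ) - z' j| := by
      rw [hDdef, EuclideanSpace.dist_eq]
      have hterm : ∀ j : Fin k ⊕ Fin (m' + 1),
          dist (latticeEmbed z j) (latticeEmbed (k := k) (m := m' + 1) z' j) ^ 2
            = |(z j : ℝ) - z' j| ^ 2 := by
        intro j
        rw [Real.dist_eq]
        simp [latticeEmbed, PiLp.toLp_apply]
      calc Real.sqrt (∑ j, dist (latticeEmbed z j) (latticeEmbed z' j) ^ 2)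
          = Real.sqrt (∑ j, |(z j : ℝ) - z' j| ^ 2) := by
            rw [Finset.sum_congr rfl fun j _ => hterm j]
        _ ≤ Real.sqrt ((∑ j, |(z j : ℝ) - z' j|) ^ 2) := by
            apply Real.sqrt_le_sqrt
            exact Finset.sum_sq_le_sq_sum_of_nonneg fun j _ => abs_nonneg _
        _ = ∑ j, |(z j : ℝ) - z' j| := Real.sqrt_sq (Finset.sum_nonneg fun j _ => abs_nonneg _)
    have hsplit : ∑ j : Fin k ⊕ Fin (m' + 1), |(z j : ℝ) - z' j|
        = (∑ i, |a i|) + ∑ l, |b l| := by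
      rw [Fintype.sum_sum_type]
    have hsa : ∑ i, |a i| ≤ (k : ℝ) * ((1 + R * (m' + 1)) * |b lmax|) := by
      calc ∑ i, |a i| ≤ ∑ _i : Fin k, (1 + R * (m' + 1)) * |b lmax| :=
            Finset.sum_le_sum fun i _ => habs i
        _ = (k : ℝ) * ((1 + R * (m' + 1)) * |b lmax|) := by
            rw [Finset.sum_const, Finset.card_univ, Fintype.card_fin, nsmul_eq_mul]
    have hsb : ∑ l, |b l| ≤ ((m' : ℝ) + 1) * |b lmax| := by
      calc ∑ l, |b l| ≤ ∑ _l : Fin (m' + 1), |b lmax| := Finset.sum_le_sum fun l _ => hlmax' l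
        _ = ((m' : ℝ) + 1) * |b lmax| := by
            rw [Finset.sum_const, Finset.card_univ, Fintype.card_fin, nsmul_eq_mul]
            push_cast
            ring
    rw [hC₁def]
    calc D ≤ (∑ i, |a i|) + ∑ l, |b l| := by rw [← hsplit]; exact hsum
      _ ≤ (k : ℝ) * ((1 + R * (m' + 1)) * |b lmax|) + ((m' : ℝ) + 1) * |b lmax| := by
          linarith
      _ = ((k : ℝ) * (1 + R * (m' + 1)) + (m' + 1)) * |b lmax| := by push_cast; ring
  set T : Fin k → Set (Fin (m' + 1) → ℝ) :=
    fun i => {v | |a i + ∑ l, v l * b l| < 1 ∧ ∀ l, |v l| ≤ R} with hT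
  have hsubT : S ⊆ Set.pi univ T := by
    intro M hM
    rw [Set.mem_pi]
    intro i _
    exact ⟨key M hM i, fun l => hMR M hM.1 i l⟩
  calc volume S ≤ volume (Set.pi univ T) := measure_mono hsubT
    _ = ∏ i, volume (T i) := volume_pi_pi T
    _ ≤ ∏ _i : Fin k, ENNReal.ofReal (2 / |b lmax|) * ENNReal.ofReal (2 * R) ^ m' :=
        Finset.prod_le_prod' fun i _ => row_bound m' (a i) R b lmax hc0
    _ = (ENNReal.ofReal (2 / |b lmax|) * ENNReal.ofReal (2 * R) ^ m') ^ k := by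
        rw [Finset.prod_const, Finset.card_univ, Fintype.card_fin]
    _ ≤ ENNReal.ofReal ((2 * C₁ * (2 * R) ^ m') ^ k * D ^ (-(k : ℝ))) := by
        rw [← ENNReal.ofReal_pow (by positivity : (0 : ℝ) ≤ 2 * R),
          ← ENNReal.ofReal_mul (by positivity),
          ← ENNReal.ofReal_pow (by positivity)]
        apply ENNReal.ofReal_le_ofReal
        have hrpow : D ^ (-(k : ℝ)) = (D ^ k)⁻¹ := by
          rw [Real.rpow_neg hD0.le, Real.rpow_natCast]
        rw [hrpow]
        have hre : (2 * C₁ * (2 * R) ^ m') ^ k * (D ^ k)⁻¹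
            = (2 * C₁ * (2 * R) ^ m' / D) ^ k := by
          rw [div_pow]
          ring
        rw [hre]
        apply pow_le_pow_left₀ (by positivity)
        rw [div_mul_eq_mul_div, div_le_div_iff₀ hcpos hD0]
        nlinarith [pow_pos (by positivity : (0:ℝ) < 2 * R) m', hDle, hcpos, hD0]

end
end
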